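/- arXiv:0905.2646 — 8 statements merged into one kernel-verified Lean document; each statement's English description precedes it below -/
import Mathlib

section
/- Let w = (w_1, …, w_n) be a probability vector with w_i > 0 for all i, let λ ∈ (0,1], and suppose M(w) is positive definite, D(M(w)^{-1}) is nonzero, and the updated vector w' with w'_i = w_i d_i(w)^λ / Σ_j w_j d_j(w)^λ satisfies that M(w') is positive definite, where d_i(w) = tr(M(w)^{-1} D(M(w)^{-1}) M(w)^{-1} A_i). Then ψ(M(w')^{-1}) ≤ ψ(M(w)^{-1}); equivalently, φ(M(w')) ≥ φ(M(w)) for φ(M) = -ψ(M^{-1}). (General monotonicity of the multiplicative algorithm.) -/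
open Matrix Finset

section AuxLemmasForStmt0
variable {m : ℕ}

lemma trace_transpose_mul_eq (P Q : Matrix (Fin m) (Fin m) ℝ) :
    (Pᵀ * Q).trace = ∑ p : Fin m × Fin m, P p.1 p.2 * Q p.1 p.2 := by
  rw [Matrix.trace, Fintype.sum_prod_type]
  simp only [Matrix.diag, Matrix.mul_apply, Matrix.transpose_apply]
  exact Finset.sum_comm

lemma trace_transpose_mul_self_nonneg (P : Matrix (Fin m) (Fin m) ℝ) :
    0 ≤ (Pᵀ * P).trace := by
  rw [trace_transpose_mul_eq]
  exact Finset.sum_nonneg fun p _ => mul_self_nonneg _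

lemma trace_transpose_mul_sq (P Q : Matrix (Fin m) (Fin m) ℝ) :
    ((Pᵀ * Q).trace) ^ 2 ≤ (Pᵀ * P).trace * (Qᵀ * Q).trace := by
  rw [trace_transpose_mul_eq, trace_transpose_mul_eq, trace_transpose_mul_eq]
  have := Finset.sum_mul_sq_le_sq_mul_sq Finset.univ
    (fun p : Fin m × Fin m => P p.1 p.2) (fun p : Fin m × Fin m => Q p.1 p.2)
  simpa [pow_two] using this

lemma weighted_chebyshev {n : ℕ} (w f g : Fin n → ℝ) (hw : ∀ i, 0 ≤ w i)
    (hw1 : ∑ i, w i = 1) (hmono : ∀ i j, 0 ≤ (f i - f j) * (g i - g j)) :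
    (∑ i, w i * f i) * (∑ i, w i * g i) ≤ ∑ i, w i * (f i * g i) := by
  have key : 0 ≤ ∑ i, ∑ j, w i * w j * ((f i - f j) * (g i - g j)) :=
    Finset.sum_nonneg fun i _ => Finset.sum_nonneg fun j _ =>
      mul_nonneg (mul_nonneg (hw i) (hw j)) (hmono i j)
  have expand : ∑ i, ∑ j, w i * w j * ((f i - f j) * (g i - g j))
      = 2 * (∑ i, w i * (f i * g i)) - 2 * ((∑ i, w i * f i) * (∑ i, w i * g i)) := by
    have h1 : ∀ i : Fin n, ∑ j, w i * w j * ((f i - f j) * (g i - g j))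
        = w i * (f i * g i) - (w i * f i) * (∑ j, w j * g j)
          - (w i * g i) * (∑ j, w j * f j) + w i * (∑ j, w j * (f j * g j)) := by
      intro i
      rw [Finset.mul_sum, Finset.mul_sum, Finset.mul_sum]
      rw [show w i * (f i * g i) = w i * (f i * g i) * ∑ j, w j by rw [hw1]; ring,
        Finset.mul_sum]
      rw [← Finset.sum_sub_distrib, ← Finset.sum_sub_distrib, ← Finset.sum_add_distrib]
      exact Finset.sum_congr rfl fun j _ => by ring
    rw [Finset.sum_congr rfl fun i _ => h1 i]
    rw [Finset.sum_add_distrib, Finset.sum_sub_distrib, Finset.sum_sub_distrib,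
      ← Finset.sum_mul, ← Finset.sum_mul, ← Finset.sum_mul]
    rw [hw1]
    ring
  linarith

lemma posSemidef_exists_eq_conjTranspose_mul_self {A : Matrix (Fin m) (Fin m) ℝ}
    (h : A.PosSemidef) : ∃ B : Matrix (Fin m) (Fin m) ℝ, A = Bᴴ * B := by
  classical
  open scoped MatrixOrder in
  obtain ⟨B, hB⟩ := CStarAlgebra.nonneg_iff_eq_star_mul_self.mp h.nonneg
  exact ⟨B, hB⟩

end AuxLemmasForStmt0

/-- General monotonicity of the multiplicative algorithm (Theorem 1).
`ψ` is a criterion on positive definite matrices with supergradient map `D`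
(so that `ψ` is increasing and concave); one step of the multiplicative
algorithm with power `lam ∈ (0,1]` does not increase `ψ(M(w)⁻¹)`. -/
theorem stmt_0 {n m : ℕ} (hn : 0 < n) (hm : 0 < m)
    (A : Fin n → Matrix (Fin m) (Fin m) ℝ) (hA : ∀ i, (A i).PosSemidef)
    (ψ : Matrix (Fin m) (Fin m) ℝ → ℝ)
    (D : Matrix (Fin m) (Fin m) ℝ → Matrix (Fin m) (Fin m) ℝ)
    -- (i) `D M` is symmetric positive semidefinite for positive definite `M`
    (hDpsd : ∀ M : Matrix (Fin m) (Fin m) ℝ, M.PosDef → (D M).PosSemidef)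
    -- (ii) `ψ` is concave with supergradient `D`
    (hconc : ∀ M₁ M₂ : Matrix (Fin m) (Fin m) ℝ, M₁.PosDef → M₂.PosDef →
      ψ M₂ ≤ ψ M₁ + (D M₁ * (M₂ - M₁)).trace)
    -- the moment matrix map
    (M : (Fin n → ℝ) → Matrix (Fin m) (Fin m) ℝ)
    (hM : ∀ v : Fin n → ℝ, M v = ∑ i, v i • A i)
    -- the design `w` : a probability vector with positive weights
    (w : Fin n → ℝ) (hw : ∀ i, 0 < w i) (hw1 : ∑ i, w i = 1)
    -- the power parameter
    (lam : ℝ) (hlam0 : 0 < lam) (hlam1 : lam ≤ 1)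
    -- the sensitivities d_i(w)
    (d : Fin n → ℝ)
    (hd : ∀ i, d i = ((M w)⁻¹ * D ((M w)⁻¹) * (M w)⁻¹ * A i).trace)
    -- the updated design
    (w' : Fin n → ℝ)
    (hw' : ∀ i, w' i = w i * d i ^ lam / ∑ j, w j * d j ^ lam)
    -- conditions of Theorem 1
    (hMwpos : (M w).PosDef)
    (hDne : D ((M w)⁻¹) ≠ 0)
    (hMw'pos : (M w').PosDef) :
    ψ ((M w')⁻¹) ≤ ψ ((M w)⁻¹) := by
  classical
  set B : Matrix (Fin m) (Fin m) ℝ := (M w)⁻¹ with hBdef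
  set C : Matrix (Fin m) (Fin m) ℝ := (M w')⁻¹ with hCdef
  set H : Matrix (Fin m) (Fin m) ℝ := D B with hHdef
  have hBpd : B.PosDef := hMwpos.inv
  have hCpd : C.PosDef := hMw'pos.inv
  have hHpsd : H.PosSemidef := hDpsd B hBpd
  -- symmetry
  have hBsym : Bᵀ = B := by
    rw [← Matrix.conjTranspose_eq_transpose_of_trivial]; exact hBpd.1
  have hCsym : Cᵀ = C := by
    rw [← Matrix.conjTranspose_eq_transpose_of_trivial]; exact hCpd.1
  -- inverse identities
  have hBM : B * M w = 1 := Matrix.nonsing_inv_mul _ (isUnit_iff_ne_zero.mpr hMwpos.det_pos.ne')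
  have hMB : M w * B = 1 := Matrix.mul_nonsing_inv _ (isUnit_iff_ne_zero.mpr hMwpos.det_pos.ne')
  have hCN : C * M w' = 1 :=
    Matrix.nonsing_inv_mul _ (isUnit_iff_ne_zero.mpr hMw'pos.det_pos.ne')
  -- square-root decompositions
  obtain ⟨P, hP⟩ := posSemidef_exists_eq_conjTranspose_mul_self hHpsd
  rw [Matrix.conjTranspose_eq_transpose_of_trivial] at hP
  have hAR : ∀ i, ∃ Ri : Matrix (Fin m) (Fin m) ℝ, A i = Riᵀ * Ri := fun i => by
    obtain ⟨Ri, hRi⟩ := posSemidef_exists_eq_conjTranspose_mul_self (hA i)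
    exact ⟨Ri, by rwa [Matrix.conjTranspose_eq_transpose_of_trivial] at hRi⟩
  choose R hR using hAR
  obtain ⟨Q, hQ⟩ := posSemidef_exists_eq_conjTranspose_mul_self hCpd.posSemidef
  rw [Matrix.conjTranspose_eq_transpose_of_trivial] at hQ
  -- auxiliary quantities
  set a : Fin n → ℝ := fun i => (C * H * C * A i).trace with hadef
  set t : Fin n → ℝ := fun i => (B * H * C * A i).trace with htdef
  set s : ℝ := ∑ j, w j * d j ^ lam with hsdef
  -- matrix (sum-of-squares) forms
  have hd_eq : ∀ i, d i = ((P * B * (R i)ᵀ)ᵀ * (P * B * (R i)ᵀ)).trace := by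
    intro i
    calc d i = (B * H * B * A i).trace := hd i
      _ = ((B * Pᵀ * P * B * (R i)ᵀ) * R i).trace := by
          rw [hP, hR i]; congr 1; simp only [Matrix.mul_assoc]
      _ = (R i * (B * Pᵀ * P * B * (R i)ᵀ)).trace := Matrix.trace_mul_comm _ _
      _ = ((P * B * (R i)ᵀ)ᵀ * (P * B * (R i)ᵀ)).trace := by
          congr 1
          simp only [Matrix.transpose_mul, Matrix.transpose_transpose, hBsym,
            Matrix.mul_assoc]
  have ha_eq : ∀ i, a i = ((P * C * (R i)ᵀ)ᵀ * (P * C * (R i)ᵀ)).trace := by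
    intro i
    calc a i = (C * H * C * A i).trace := rfl
      _ = ((C * Pᵀ * P * C * (R i)ᵀ) * R i).trace := by
          rw [hP, hR i]; congr 1; simp only [Matrix.mul_assoc]
      _ = (R i * (C * Pᵀ * P * C * (R i)ᵀ)).trace := Matrix.trace_mul_comm _ _
      _ = ((P * C * (R i)ᵀ)ᵀ * (P * C * (R i)ᵀ)).trace := by
          congr 1
          simp only [Matrix.transpose_mul, Matrix.transpose_transpose, hCsym,
            Matrix.mul_assoc]
  have ht_eq : ∀ i, t i = ((P * B * (R i)ᵀ)ᵀ * (P * C * (R i)ᵀ)).trace := by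
    intro i
    calc t i = (B * H * C * A i).trace := rfl
      _ = ((B * Pᵀ * P * C * (R i)ᵀ) * R i).trace := by
          rw [hP, hR i]; congr 1; simp only [Matrix.mul_assoc]
      _ = (R i * (B * Pᵀ * P * C * (R i)ᵀ)).trace := Matrix.trace_mul_comm _ _
      _ = ((P * B * (R i)ᵀ)ᵀ * (P * C * (R i)ᵀ)).trace := by
          congr 1
          simp only [Matrix.transpose_mul, Matrix.transpose_transpose, hBsym,
            Matrix.mul_assoc]
  have hd0 : ∀ i, 0 ≤ d i := fun i => (hd_eq i) ▸ trace_transpose_mul_self_nonneg _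
  have ha0 : ∀ i, 0 ≤ a i := fun i => (ha_eq i) ▸ trace_transpose_mul_self_nonneg _
  -- sum identity
  have hsum : ∀ (Z : Matrix (Fin m) (Fin m) ℝ) (v : Fin n → ℝ),
      ∑ i, v i * (Z * A i).trace = (Z * M v).trace := by
    intro Z v
    rw [hM v, Finset.mul_sum, Matrix.trace_sum]
    exact Finset.sum_congr rfl fun i _ => by
      rw [mul_smul_comm, Matrix.trace_smul, smul_eq_mul]
  have hc : ∑ i, w i * d i = (B * H).trace := by
    calc ∑ i, w i * d i = ∑ i, w i * ((B * H * B) * A i).trace :=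
          Finset.sum_congr rfl fun i _ => by rw [hd i]
      _ = ((B * H * B) * M w).trace := hsum _ _
      _ = (B * H).trace := by rw [Matrix.mul_assoc (B * H) B (M w), hBM, mul_one]
  have hτeq : ∑ i, w' i * a i = (C * H).trace := by
    calc ∑ i, w' i * a i = ((C * H * C) * M w').trace := hsum _ _
      _ = (C * H).trace := by rw [Matrix.mul_assoc (C * H) C (M w'), hCN, mul_one]
  have hteq : ∑ i, w i * t i = (C * H).trace := by
    calc ∑ i, w i * t i = ((B * H * C) * M w).trace := hsum _ _
      _ = (M w * (B * H * C)).trace := Matrix.trace_mul_comm _ _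
      _ = ((M w * B) * (H * C)).trace := by congr 1; simp only [Matrix.mul_assoc]
      _ = (H * C).trace := by rw [hMB, one_mul]
      _ = (C * H).trace := Matrix.trace_mul_comm _ _
  set τ : ℝ := (C * H).trace with hτdef
  have hτ0 : 0 ≤ τ := by
    have : τ = ((Q * Pᵀ)ᵀ * (Q * Pᵀ)).trace := by
      calc τ = ((Qᵀ * Q) * (Pᵀ * P)).trace := by rw [hτdef, hQ, hP]
        _ = (((Qᵀ * Q) * Pᵀ) * P).trace := by congr 1; simp only [Matrix.mul_assoc]
        _ = (P * ((Qᵀ * Q) * Pᵀ)).trace := Matrix.trace_mul_comm _ _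
        _ = ((Q * Pᵀ)ᵀ * (Q * Pᵀ)).trace := by
            congr 1
            simp only [Matrix.transpose_mul, Matrix.transpose_transpose, Matrix.mul_assoc]
    rw [this]; exact trace_transpose_mul_self_nonneg _
  -- pointwise Cauchy-Schwarz
  have t_le : ∀ i, t i ≤ Real.sqrt (a i * d i) := by
    intro i
    have hcs : (t i) ^ 2 ≤ d i * a i := by
      rw [hd_eq i, ha_eq i, ht_eq i]; exact trace_transpose_mul_sq _ _
    calc t i ≤ |t i| := le_abs_self _
      _ = Real.sqrt ((t i) ^ 2) := (Real.sqrt_sq_eq_abs _).symm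
      _ ≤ Real.sqrt (a i * d i) := Real.sqrt_le_sqrt (by rw [mul_comm]; exact hcs)
  -- facts about s and w'
  have hs0 : 0 ≤ s :=
    Finset.sum_nonneg fun j _ => mul_nonneg (hw j).le (Real.rpow_nonneg (hd0 j) _)
  have hsne : s ≠ 0 := by
    intro h
    have hz : ∀ i, w' i = 0 := fun i => by rw [hw' i, h, div_zero]
    have hMz : M w' = 0 := by
      rw [hM w']
      exact Finset.sum_eq_zero fun i _ => by rw [hz i, zero_smul]
    rw [hMz] at hMw'pos
    have := hMw'pos.det_pos
    rw [haveI : Nonempty (Fin m) := ⟨⟨0, hm⟩⟩; Matrix.det_zero] at this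
    exact lt_irrefl 0 this
  have hw'0 : ∀ i, 0 ≤ w' i := fun i => by
    rw [hw' i]
    exact div_nonneg (mul_nonneg (hw i).le (Real.rpow_nonneg (hd0 i) _)) hs0
  have hdd : ∀ i, d i ^ lam * d i ^ (1 - lam) = d i := by
    intro i
    rw [← Real.rpow_add_of_nonneg (hd0 i) hlam0.le (by linarith)]
    norm_num
  -- pointwise rearrangement
  have hpoint : ∀ i, w i * Real.sqrt (a i * d i)
      = Real.sqrt (w' i * a i) * Real.sqrt (s * (w i * d i ^ (1 - lam))) := by
    intro i
    rw [← Real.sqrt_mul (mul_nonneg (hw'0 i) (ha0 i)),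
      show w i * Real.sqrt (a i * d i) = Real.sqrt ((w i) ^ 2) * Real.sqrt (a i * d i) by
        rw [Real.sqrt_sq (hw i).le],
      ← Real.sqrt_mul (sq_nonneg _)]
    congr 1
    rw [hw' i]
    field_simp
    linear_combination (-(w i ^ 2 * a i)) * hdd i
  -- sum Cauchy-Schwarz
  have chain1 : τ ≤ ∑ i, w i * Real.sqrt (a i * d i) := by
    rw [← hteq]
    exact Finset.sum_le_sum fun i _ => mul_le_mul_of_nonneg_left (t_le i) (hw i).le
  have chain2 : ∑ i, w i * Real.sqrt (a i * d i)
      ≤ Real.sqrt τ * Real.sqrt (s * ∑ i, w i * d i ^ (1 - lam)) := by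
    calc ∑ i, w i * Real.sqrt (a i * d i)
        = ∑ i, Real.sqrt (w' i * a i) * Real.sqrt (s * (w i * d i ^ (1 - lam))) :=
          Finset.sum_congr rfl fun i _ => hpoint i
      _ ≤ Real.sqrt (∑ i, w' i * a i) * Real.sqrt (∑ i, s * (w i * d i ^ (1 - lam))) :=
          Real.sum_sqrt_mul_sqrt_le _ (fun i => mul_nonneg (hw'0 i) (ha0 i))
            (fun i => mul_nonneg hs0 (mul_nonneg (hw i).le (Real.rpow_nonneg (hd0 i) _)))
      _ = Real.sqrt τ * Real.sqrt (s * ∑ i, w i * d i ^ (1 - lam)) := by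
          rw [hτeq, Finset.mul_sum]
  set K : ℝ := s * ∑ i, w i * d i ^ (1 - lam) with hKdef
  have hK0 : 0 ≤ K := mul_nonneg hs0
    (Finset.sum_nonneg fun i _ => mul_nonneg (hw i).le (Real.rpow_nonneg (hd0 i) _))
  have hτK : τ ≤ K := by
    have h1 : τ ≤ Real.sqrt (τ * K) := by
      rw [Real.sqrt_mul hτ0]
      exact chain1.trans chain2
    have h2 : τ ^ 2 ≤ τ * K := by
      have := mul_self_le_mul_self hτ0 h1
      rwa [Real.mul_self_sqrt (mul_nonneg hτ0 hK0), ← pow_two] at this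
    nlinarith
  -- Chebyshev
  have hcheb : K ≤ ∑ i, w i * d i := by
    have hmono : ∀ i j, 0 ≤ (d i ^ lam - d j ^ lam) * (d i ^ (1 - lam) - d j ^ (1 - lam)) := by
      intro i j
      rcases le_total (d i) (d j) with h | h
      · have h1 : d i ^ lam ≤ d j ^ lam := Real.rpow_le_rpow (hd0 i) h hlam0.le
        have h2 : d i ^ (1 - lam) ≤ d j ^ (1 - lam) :=
          Real.rpow_le_rpow (hd0 i) h (by linarith)
        nlinarith
      · have h1 : d j ^ lam ≤ d i ^ lam := Real.rpow_le_rpow (hd0 j) h hlam0.le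
        have h2 : d j ^ (1 - lam) ≤ d i ^ (1 - lam) :=
          Real.rpow_le_rpow (hd0 j) h (by linarith)
        nlinarith
    have := weighted_chebyshev w (fun i => d i ^ lam) (fun i => d i ^ (1 - lam))
      (fun i => (hw i).le) hw1 hmono
    calc K = (∑ i, w i * d i ^ lam) * (∑ i, w i * d i ^ (1 - lam)) := by rw [hKdef, hsdef]
      _ ≤ ∑ i, w i * (d i ^ lam * d i ^ (1 - lam)) := this
      _ = ∑ i, w i * d i := Finset.sum_congr rfl fun i _ => by rw [hdd i]
  -- conclude
  have hfinal := hconc B C hBpd hCpd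
  have htr : (H * (C - B)).trace = τ - (B * H).trace := by
    rw [Matrix.mul_sub, Matrix.trace_sub, Matrix.trace_mul_comm H C,
      Matrix.trace_mul_comm H B, hτdef]
  rw [htr] at hfinal
  have : τ ≤ (B * H).trace := by rw [← hc]; exact hτK.trans hcheb
  linarith
end

section
/- Let w = (w_1, …, w_n) be a probability vector with w_i > 0 for all i, let λ ∈ (0,1], set d_i(w) = tr(M(w)^{-1} A_i), and define w'_i = w_i d_i(w)^λ / Σ_j w_j d_j(w)^λ. If M(w) and M(w') are both positive definite, then det M(w') ≥ det M(w). (Monotonicity of the multiplicative algorithm for the D-criterion φ_0(M) = log det M, for every λ ∈ (0,1].) -/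
open Matrix

section AuxStmt1
open Finset

lemma diag_nonneg_of_psd {m : ℕ} {C : Matrix (Fin m) (Fin m) ℝ} (h : C.PosSemidef)
    (j : Fin m) : 0 ≤ C j j := by
  have := h.dotProduct_mulVec_nonneg (Pi.single j 1)
  simpa [dotProduct, mulVec, Pi.single_apply, Finset.sum_ite_eq, Finset.sum_ite_eq'] using this


lemma core_ineq {n m : ℕ} (hm : 0 < m)
    (w d : Fin n → ℝ) (b : Fin n → Fin m → ℝ) (μ : Fin m → ℝ)
    (lam S : ℝ) (hlam0 : 0 < lam) (hlam1 : lam ≤ 1)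
    (hw : ∀ i, 0 < w i) (hw1 : ∑ i, w i = 1)
    (hb : ∀ i j, 0 ≤ b i j)
    (hcol : ∀ j, ∑ i, w i * b i j = 1)
    (hrow : ∀ i, ∑ j, b i j = d i)
    (hS : S = ∑ i, w i * d i ^ lam)
    (hμ : ∀ j, μ j = ∑ i, (w i * d i ^ lam / S) * b i j)
    (hμpos : ∀ j, 0 < μ j) :
    (1:ℝ) ≤ ∏ j, μ j := by
  have hd0 : ∀ i, 0 ≤ d i := fun i => (hrow i) ▸ Finset.sum_nonneg (fun j _ => hb i j)
  have hmR : (0:ℝ) < (m:ℝ) := by exact_mod_cast hm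
  have hwd : ∑ i, w i * d i = (m:ℝ) := by
    have : ∀ i, w i * d i = ∑ j, w i * b i j := by
      intro i; rw [← Finset.mul_sum, hrow i]
    simp_rw [this]
    rw [Finset.sum_comm]
    simp [hcol]
  -- positivity of S
  have hex : ∃ i, 0 < d i := by
    by_contra h
    push_neg at h
    have : ∀ i, d i = 0 := fun i => le_antisymm (h i) (hd0 i)
    rw [show ∑ i, w i * d i = 0 by simp [this]] at hwd
    exact hmR.ne (by rw [hwd])
  have hS0 : 0 < S := by
    obtain ⟨i0, hi0⟩ := hex
    rw [hS]
    refine Finset.sum_pos' (fun i _ => ?_) ⟨i0, Finset.mem_univ i0, ?_⟩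
    · exact mul_nonneg (hw i).le (Real.rpow_nonneg (hd0 i) lam)
    · exact mul_pos (hw i0) (Real.rpow_pos_of_pos hi0 lam)
  classical
  set t : Finset (Fin n) := Finset.univ.filter (fun i => 0 < d i) with ht
  have hbt : ∀ j, ∀ i, i ∉ t → b i j = 0 := by
    intro j i hi
    have hdi : d i = 0 := by
      simp only [ht, Finset.mem_filter, Finset.mem_univ, true_and, not_lt] at hi
      exact le_antisymm hi (hd0 i)
    have h1 : b i j ≤ ∑ j', b i j' :=
      Finset.single_le_sum (fun j' _ => hb i j') (Finset.mem_univ j)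
    rw [hrow i, hdi] at h1
    exact le_antisymm h1 (hb i j)
  -- per-j Jensen inequality
  have key : ∀ j, lam * ∑ i ∈ t, (w i * b i j) * Real.log (d i) ≤
      Real.log S + Real.log (μ j) := by
    intro j
    have h1 : ∑ i ∈ t, (w i * b i j) = 1 := by
      rw [← hcol j]
      exact Finset.sum_subset (Finset.subset_univ t)
        (fun i _ hi => by rw [hbt j i hi, mul_zero])
    have jensen := (strictConcaveOn_log_Ioi.concaveOn).le_map_sum
      (w := fun i => w i * b i j) (p := fun i => d i ^ lam) (t := t)
      (fun i _ => mul_nonneg (hw i).le (hb i j)) h1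
      (fun i hi => by
        have : 0 < d i := (Finset.mem_filter.mp hi).2
        exact Set.mem_Ioi.mpr (Real.rpow_pos_of_pos this lam))
    simp only [smul_eq_mul] at jensen
    have hsum_eq : ∑ i ∈ t, (w i * b i j) * d i ^ lam = S * μ j := by
      rw [Finset.sum_subset (Finset.subset_univ t)
        (fun i _ hi => by rw [hbt j i hi, mul_zero, zero_mul])]
      rw [hμ j, Finset.mul_sum]
      refine Finset.sum_congr rfl (fun i _ => ?_)
      field_simp
    have hlog_eq : ∀ i ∈ t, Real.log (d i ^ lam) = lam * Real.log (d i) := by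
      intro i hi
      exact Real.log_rpow (Finset.mem_filter.mp hi).2 lam
    calc lam * ∑ i ∈ t, (w i * b i j) * Real.log (d i)
        = ∑ i ∈ t, (w i * b i j) * Real.log (d i ^ lam) := by
          rw [Finset.mul_sum]
          refine Finset.sum_congr rfl (fun i hi => ?_)
          rw [hlog_eq i hi]; ring
      _ ≤ Real.log (∑ i ∈ t, (w i * b i j) * d i ^ lam) := jensen
      _ = Real.log (S * μ j) := by rw [hsum_eq]
      _ = Real.log S + Real.log (μ j) := Real.log_mul hS0.ne' (hμpos j).ne'
  -- sum over j
  have hsumj : lam * ∑ i ∈ t, w i * (d i * Real.log (d i)) ≤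
      (m:ℝ) * Real.log S + ∑ j, Real.log (μ j) := by
    have h2 : ∑ j, (lam * ∑ i ∈ t, (w i * b i j) * Real.log (d i)) ≤
        ∑ j, (Real.log S + Real.log (μ j)) :=
      Finset.sum_le_sum (fun j _ => key j)
    rw [Finset.sum_add_distrib] at h2
    simp only [Finset.sum_const, Finset.card_univ, Fintype.card_fin, nsmul_eq_mul] at h2
    rw [← Finset.mul_sum] at h2
    have hswap : ∑ j : Fin m, ∑ i ∈ t, (w i * b i j) * Real.log (d i)
        = ∑ i ∈ t, w i * (d i * Real.log (d i)) := by
      rw [Finset.sum_comm]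
      refine Finset.sum_congr rfl (fun i hi => ?_)
      rw [show ∑ j, (w i * b i j) * Real.log (d i)
          = (∑ j, b i j) * (w i * Real.log (d i)) by
        rw [Finset.sum_mul]
        exact Finset.sum_congr rfl (fun j _ => by ring)]
      rw [hrow i]; ring
    rw [hswap] at h2
    exact h2
  -- Jensen for x log x
  have hJ2 : (m:ℝ) * Real.log (m:ℝ) ≤ ∑ i ∈ t, w i * (d i * Real.log (d i)) := by
    have j2 := (Real.convexOn_mul_log).map_sum_le
      (w := w) (p := d) (t := Finset.univ)
      (fun i _ => (hw i).le) hw1 (fun i _ => Set.mem_Ici.mpr (hd0 i))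
    simp only [smul_eq_mul] at j2
    rw [show ∑ i, w i * d i = (m:ℝ) from hwd] at j2
    have : ∑ i, w i * (d i * Real.log (d i)) = ∑ i ∈ t, w i * (d i * Real.log (d i)) := by
      refine (Finset.sum_subset (Finset.subset_univ t) (fun i _ hi => ?_)).symm
      have hdi : d i = 0 := by
        simp only [ht, Finset.mem_filter, Finset.mem_univ, true_and, not_lt] at hi
        exact le_antisymm hi (hd0 i)
      simp [hdi]
    rw [← this]
    exact j2
  -- Jensen for rpow
  have hJ3 : Real.log S ≤ lam * Real.log (m:ℝ) := by
    have j3 := (Real.concaveOn_rpow hlam0.le hlam1).le_map_sum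
      (w := w) (p := d) (t := Finset.univ)
      (fun i _ => (hw i).le) hw1 (fun i _ => Set.mem_Ici.mpr (hd0 i))
    simp only [smul_eq_mul] at j3
    rw [hwd] at j3
    rw [← hS] at j3
    calc Real.log S ≤ Real.log ((m:ℝ) ^ lam) := Real.log_le_log hS0 j3
      _ = lam * Real.log (m:ℝ) := Real.log_rpow hmR lam
  -- conclude
  have hfin : 0 ≤ ∑ j, Real.log (μ j) := by
    nlinarith [hsumj, hJ2, hJ3, hlam0.le, hmR.le]
  calc (1:ℝ) = Real.exp 0 := by rw [Real.exp_zero]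
    _ ≤ Real.exp (∑ j, Real.log (μ j)) := Real.exp_le_exp.mpr hfin
    _ = ∏ j, Real.exp (Real.log (μ j)) := Real.exp_sum _ _
    _ = ∏ j, μ j := Finset.prod_congr rfl (fun j _ => Real.exp_log (hμpos j))

end AuxStmt1

/-- Monotonicity of the multiplicative algorithm for the D-criterion
`φ₀(M) = log det M`, for every power `lam ∈ (0,1]`. -/
theorem stmt_1 {n m : ℕ} (hn : 0 < n) (hm : 0 < m)
    (A : Fin n → Matrix (Fin m) (Fin m) ℝ) (hA : ∀ i, (A i).PosSemidef)
    (M : (Fin n → ℝ) → Matrix (Fin m) (Fin m) ℝ)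
    (hM : ∀ v : Fin n → ℝ, M v = ∑ i, v i • A i)
    (w : Fin n → ℝ) (hw : ∀ i, 0 < w i) (hw1 : ∑ i, w i = 1)
    (lam : ℝ) (hlam0 : 0 < lam) (hlam1 : lam ≤ 1)
    (d : Fin n → ℝ) (hd : ∀ i, d i = ((M w)⁻¹ * A i).trace)
    (w' : Fin n → ℝ)
    (hw' : ∀ i, w' i = w i * d i ^ lam / ∑ j, w j * d j ^ lam)
    (hMwpos : (M w).PosDef) (hMw'pos : (M w').PosDef) :
    (M w).det ≤ (M w').det := by
  classical
  have hdet0 : 0 < (M w).det := hMwpos.det_pos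
  have hMunit : IsUnit (M w).det := hdet0.ne'.isUnit
  have hinv : ((M w)⁻¹).PosDef := hMwpos.inv
  obtain ⟨R, hRsd, hRR⟩ : ∃ R : Matrix (Fin m) (Fin m) ℝ, R.PosSemidef ∧ R * R = (M w)⁻¹ := by
    open scoped MatrixOrder in
    exact ⟨CFC.sqrt ((M w)⁻¹), Matrix.nonneg_iff_posSemidef.mp (CFC.sqrt_nonneg _),
      CFC.sqrt_mul_sqrt_self _ (Matrix.nonneg_iff_posSemidef.mpr hinv.posSemidef)⟩
  have hRH : Rᴴ = R := hRsd.isHermitian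
  have h1 : (M w) * (M w)⁻¹ = 1 := Matrix.mul_nonsing_inv _ hMunit
  have h2 : (M w)⁻¹ * (M w) = 1 := Matrix.nonsing_inv_mul _ hMunit
  have hcomm : R * (M w) = (M w) * R := by
    have hc1 : (M w)⁻¹ * R = R * (M w)⁻¹ := by rw [← hRR, Matrix.mul_assoc]
    calc R * (M w) = 1 * R * (M w) := by rw [Matrix.one_mul]
      _ = (M w) * ((M w)⁻¹ * R) * (M w) := by
          rw [← h1, Matrix.mul_assoc ((M w)) _ R]
      _ = (M w) * (R * (M w)⁻¹) * (M w) := by rw [hc1]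
      _ = (M w) * R * ((M w)⁻¹ * (M w)) := by
          rw [Matrix.mul_assoc, Matrix.mul_assoc, Matrix.mul_assoc]
      _ = (M w) * R := by rw [h2, Matrix.mul_one]
  have hRMR : R * (M w) * R = 1 := by
    rw [hcomm, Matrix.mul_assoc, hRR, h1]
  -- determinant facts
  have hdetRR : R.det * R.det = ((M w)⁻¹).det := by rw [← Matrix.det_mul, hRR]
  have hdetinv : ((M w)⁻¹).det = ((M w).det)⁻¹ := by
    rw [Matrix.det_nonsing_inv, Ring.inverse_eq_inv]
  have hdetR_ne : R.det ≠ 0 := by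
    intro h
    rw [h, mul_zero, hdetinv] at hdetRR
    exact (inv_ne_zero hdet0.ne') hdetRR.symm
  have hRunit : IsUnit R := (Matrix.isUnit_iff_isUnit_det R).mpr hdetR_ne.isUnit
  -- the conjugated matrix P
  set P : Matrix (Fin m) (Fin m) ℝ := R * (M w') * R with hPdef
  have hPpd : P.PosDef := by
    refine Matrix.PosDef.of_dotProduct_mulVec_pos ?_ ?_
    · show Pᴴ = P
      rw [hPdef, Matrix.conjTranspose_mul, Matrix.conjTranspose_mul, hRH,
        hMw'pos.isHermitian, Matrix.mul_assoc]
    · intro x hx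
      have hRx : R *ᵥ x ≠ 0 := by
        intro h
        exact hx ((Matrix.mulVec_injective_iff_isUnit.mpr hRunit).eq_iff.mp
          (by rw [h, Matrix.mulVec_zero]))
      have hpos := hMw'pos.dotProduct_mulVec_pos hRx
      have hrw : star x ⬝ᵥ (P *ᵥ x) = star (R *ᵥ x) ⬝ᵥ ((M w') *ᵥ (R *ᵥ x)) := by
        calc star x ⬝ᵥ (P *ᵥ x)
            = star x ⬝ᵥ (R *ᵥ ((M w') *ᵥ (R *ᵥ x))) := by
              rw [hPdef, ← Matrix.mulVec_mulVec, ← Matrix.mulVec_mulVec]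
          _ = (star x ᵥ* R) ⬝ᵥ ((M w') *ᵥ (R *ᵥ x)) := by
              rw [Matrix.dotProduct_mulVec]
          _ = star (R *ᵥ x) ⬝ᵥ ((M w') *ᵥ (R *ᵥ x)) := by
              rw [star_mulVec, hRH]
      rw [hrw]
      exact hpos
  have hPH : P.IsHermitian := hPpd.1
  set U : Matrix (Fin m) (Fin m) ℝ := (hPH.eigenvectorUnitary : Matrix (Fin m) (Fin m) ℝ)
    with hUdef
  have hU1 : U * star U = 1 := (Matrix.mem_unitaryGroup_iff).mp hPH.eigenvectorUnitary.2
  have hU2 : star U * U = 1 := (Matrix.mem_unitaryGroup_iff').mp hPH.eigenvectorUnitary.2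
  have hUdiag : star U * P * U = Matrix.diagonal (RCLike.ofReal ∘ hPH.eigenvalues) :=
    by
      have := hPH.conjStarAlgAut_star_eigenvectorUnitary
      simpa [Unitary.conjStarAlgAut_apply] using this
  set μ : Fin m → ℝ := hPH.eigenvalues with hμdef
  have hμpos : ∀ j, 0 < μ j := hPpd.eigenvalues_pos
  -- entries of conjugated A's
  have hBpsd : ∀ i, (star U * (R * A i * R) * U).PosSemidef := by
    intro i
    have h3 : (R * A i * R).PosSemidef := by
      have := (hA i).conjTranspose_mul_mul_same R
      rwa [hRH] at this
    have := h3.conjTranspose_mul_mul_same U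
    rwa [← Matrix.star_eq_conjTranspose] at this
  have hb : ∀ i j, 0 ≤ (star U * (R * A i * R) * U) j j :=
    fun i j => diag_nonneg_of_psd (hBpsd i) j
  -- row sums give d
  have htraceB : ∀ i, (star U * (R * A i * R) * U).trace = d i := by
    intro i
    rw [Matrix.trace_mul_cycle (star U) (R * A i * R) U]
    rw [show U * star U * (R * A i * R) = R * A i * R by rw [hU1, Matrix.one_mul]]
    rw [Matrix.trace_mul_cycle R (A i) R, hRR, hd i]
  have hrow : ∀ i, ∑ j, (star U * (R * A i * R) * U) j j = d i := by
    intro i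
    rw [← htraceB i]
    simp [Matrix.trace, Matrix.diag]
  -- linearity
  have hsum_smul : ∀ (v : Fin n → ℝ),
      star U * (R * (M v) * R) * U = ∑ i, v i • (star U * (R * A i * R) * U) := by
    intro v
    rw [hM v]
    simp only [Matrix.mul_sum, Matrix.sum_mul, Matrix.mul_smul, Matrix.smul_mul]
  -- column sums give 1
  have hcol : ∀ j, ∑ i, w i * (star U * (R * A i * R) * U) j j = 1 := by
    intro j
    have e1 : star U * (R * (M w) * R) * U = (1 : Matrix (Fin m) (Fin m) ℝ) := by
      rw [hRMR, Matrix.mul_one, hU2]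
    have e2 := hsum_smul w
    rw [e1] at e2
    have e3 := congrArg (fun C : Matrix (Fin m) (Fin m) ℝ => C j j) e2
    simp only [Matrix.sum_apply, Matrix.smul_apply, smul_eq_mul, Matrix.one_apply_eq] at e3
    exact e3.symm
  -- eigenvalues as weighted sums
  have hμeq : ∀ j, μ j = ∑ i, w' i * (star U * (R * A i * R) * U) j j := by
    intro j
    have e2 := hsum_smul w'
    rw [← hPdef, hUdiag] at e2
    have e3 := congrArg (fun C : Matrix (Fin m) (Fin m) ℝ => C j j) e2
    simp only [Matrix.sum_apply, Matrix.smul_apply, smul_eq_mul,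
      Matrix.diagonal_apply_eq, Function.comp_apply] at e3
    simpa using e3
  -- apply the core inequality
  have hμeq' : ∀ j, μ j = ∑ i,
      (w i * d i ^ lam / ∑ k, w k * d k ^ lam) * (star U * (R * A i * R) * U) j j := by
    intro j
    rw [hμeq j]
    exact Finset.sum_congr rfl (fun i _ => by rw [hw' i])
  have hprod : (1:ℝ) ≤ ∏ j, μ j :=
    core_ineq hm w d (fun i j => (star U * (R * A i * R) * U) j j) μ lam
      (∑ k, w k * d k ^ lam) hlam0 hlam1 hw hw1 hb hcol hrow rfl hμeq' hμpos
  -- determinant computation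
  have hdetP : P.det = ((M w).det)⁻¹ * (M w').det := by
    rw [hPdef, Matrix.det_mul, Matrix.det_mul]
    rw [show R.det * (M w').det * R.det = (R.det * R.det) * (M w').det by ring]
    rw [hdetRR, hdetinv]
  have hdetP_eq : P.det = ∏ j, μ j := by
    rw [hPH.det_eq_prod_eigenvalues]
    simp [hμdef]
  have h9 : 1 ≤ ((M w).det)⁻¹ * (M w').det := by
    rw [← hdetP]
    rw [hdetP_eq]
    exact hprod
  calc (M w).det = (M w).det * 1 := by rw [mul_one]
    _ ≤ (M w).det * (((M w).det)⁻¹ * (M w').det) :=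
        mul_le_mul_of_nonneg_left h9 hdet0.le
    _ = (M w').det := by field_simp
end

section
/- Let p ∈ [-1, 0), let K be an m×r real matrix of full column rank (r ≤ m), let w be a probability vector with w_i > 0 for all i, let λ ∈ (0,1], set d_i(w) = tr(M(w)^{-1} K (Kᵀ M(w)^{-1} K)^{-p-1} Kᵀ M(w)^{-1} A_i), and define w'_i = w_i d_i(w)^λ / Σ_j w_j d_j(w)^λ. If M(w) and M(w') are both positive definite and not all d_i(w) are zero, then tr((Kᵀ M(w')^{-1} K)^{-p}) ≤ tr((Kᵀ M(w)^{-1} K)^{-p}). (Monotonicity of the multiplicative algorithm for φ_{p,K}(M) = -tr((Kᵀ M^{-1} K)^{-p}), p ∈ [-1, 0).) -/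
open Matrix

/-- The real power `M^s` of a symmetric matrix, defined via the spectral
decomposition: if `M = U diag(μ) Uᵀ` then `M^s = U diag(μ^s) Uᵀ`
(junk value `0` if `M` is not symmetric). -/
noncomputable def mpow {k : ℕ} (M : Matrix (Fin k) (Fin k) ℝ) (s : ℝ) :
    Matrix (Fin k) (Fin k) ℝ :=
  if h : M.IsHermitian then h.cfc (fun x => x ^ s) else 0


namespace Aux

variable {k : ℕ}

lemma cfc_real {M : Matrix (Fin k) (Fin k) ℝ} (h : M.IsHermitian) (f : ℝ → ℝ) :
    h.cfc f = (h.eigenvectorUnitary : Matrix (Fin k) (Fin k) ℝ) *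
      diagonal (f ∘ h.eigenvalues) * star (h.eigenvectorUnitary : Matrix (Fin k) (Fin k) ℝ) := by
  rw [Matrix.IsHermitian.cfc]
  simp [RCLike.ofReal_real_eq_id]

lemma trace_diag_conj (a b : Fin k → ℝ) (W : Matrix (Fin k) (Fin k) ℝ) :
    (diagonal a * W * diagonal b * star W).trace = ∑ i, ∑ j, a i * b j * (W i j)^2 := by
  simp only [Matrix.trace, Matrix.diag_apply, Matrix.mul_apply, Matrix.diagonal_apply,
    Matrix.conjTranspose_apply, Matrix.star_apply, star_trivial, ite_mul, zero_mul, mul_ite, mul_zero, Finset.sum_ite_eq, Finset.sum_ite_eq',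
    Finset.mem_univ, if_true]
  refine Finset.sum_congr rfl fun i _ => Finset.sum_congr rfl fun j _ => ?_
  ring

variable {X Y : Matrix (Fin k) (Fin k) ℝ}

lemma trace_cfc_mul_cfc (hY : Y.IsHermitian) (hX : X.IsHermitian) (g f : ℝ → ℝ) :
    (hY.cfc g * hX.cfc f).trace
      = ∑ i, ∑ j, g (hY.eigenvalues i) * f (hX.eigenvalues j) *
        ((star (hY.eigenvectorUnitary : Matrix (Fin k) (Fin k) ℝ) *
          (hX.eigenvectorUnitary : Matrix (Fin k) (Fin k) ℝ)) i j)^2 := by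
  set U := (hY.eigenvectorUnitary : Matrix (Fin k) (Fin k) ℝ) with hU
  set V := (hX.eigenvectorUnitary : Matrix (Fin k) (Fin k) ℝ) with hV
  have hUU : U * star U = 1 := Matrix.mem_unitaryGroup_iff.mp hY.eigenvectorUnitary.2
  have hU'U : star U * U = 1 := Matrix.mem_unitaryGroup_iff'.mp hY.eigenvectorUnitary.2
  have hVV : V * star V = 1 := Matrix.mem_unitaryGroup_iff.mp hX.eigenvectorUnitary.2
  set W := star U * V with hW
  have e : hY.cfc g * hX.cfc f
      = U * (diagonal (g ∘ hY.eigenvalues) * W * diagonal (f ∘ hX.eigenvalues) * star W * star U) := by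
    rw [cfc_real, cfc_real]
    simp only [hW, StarMul.star_mul, star_star, Matrix.mul_assoc, hUU, Matrix.mul_one]
    rfl
  rw [e, Matrix.trace_mul_comm, Matrix.mul_assoc, Matrix.mul_assoc, Matrix.mul_assoc, hU'U,
    Matrix.mul_one, ← Matrix.mul_assoc, ← Matrix.mul_assoc,
    show diagonal (g ∘ hY.eigenvalues) * star U * V = diagonal (g ∘ hY.eigenvalues) * W from
      (Matrix.mul_assoc _ _ _), trace_diag_conj]
  rfl

lemma cfc_rpow_zero (hY : Y.IsHermitian) : hY.cfc (fun x => x ^ (0:ℝ)) = 1 := by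
  rw [cfc_real]
  have h : (fun x => x ^ (0:ℝ)) ∘ hY.eigenvalues = fun _ => 1 := by
    funext i; simp [Real.rpow_zero]
  rw [h]
  have : diagonal (fun _ : Fin k => (1:ℝ)) = 1 := Matrix.diagonal_one
  rw [this, Matrix.mul_one]
  exact Matrix.mem_unitaryGroup_iff.mp hY.eigenvectorUnitary.2

lemma cfc_rpow_one (hY : Y.IsHermitian) : hY.cfc (fun x => x ^ (1:ℝ)) = Y := by
  rw [cfc_real]
  have h : (fun x => x ^ (1:ℝ)) ∘ hY.eigenvalues = hY.eigenvalues := by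
    funext i; simp [Real.rpow_one]
  rw [h]
  conv_rhs => rw [hY.spectral_theorem]
  congr 1

lemma row_sq_sum {W : Matrix (Fin k) (Fin k) ℝ} (h : W * star W = 1) (i : Fin k) :
    ∑ j, (W i j)^2 = 1 := by
  have h2 : (W * star W) i i = 1 := by rw [h, Matrix.one_apply_eq]
  simpa [Matrix.mul_apply, Matrix.star_apply, pow_two] using h2

lemma col_sq_sum {W : Matrix (Fin k) (Fin k) ℝ} (h : star W * W = 1) (j : Fin k) :
    ∑ i, (W i j)^2 = 1 := by
  have h2 : (star W * W) j j = 1 := by rw [h, Matrix.one_apply_eq]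
  simpa [Matrix.mul_apply, Matrix.star_apply, pow_two] using h2

lemma scalar_tangent {μ ν q : ℝ} (hμ : 0 < μ) (hν : 0 ≤ ν) (hq0 : 0 < q) (hq1 : q ≤ 1) :
    ν ^ q ≤ (1 - q) * μ ^ q + q * (μ ^ (q - 1) * ν) := by
  have h := Real.geom_mean_le_arith_mean2_weighted (w₁ := q) (w₂ := 1 - q) (p₁ := ν / μ)
    (p₂ := 1) hq0.le (by linarith) (div_nonneg hν hμ.le) zero_le_one (by ring)
  rw [Real.one_rpow, mul_one, mul_one] at h
  have hμq : 0 < μ ^ q := Real.rpow_pos_of_pos hμ q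
  calc ν ^ q = μ ^ q * (ν / μ) ^ q := by
        rw [Real.div_rpow hν hμ.le, mul_comm, div_mul_cancel₀ _ hμq.ne']
    _ ≤ μ ^ q * (q * (ν / μ) + (1 - q)) := mul_le_mul_of_nonneg_left h hμq.le
    _ = (1 - q) * μ ^ q + q * (μ ^ (q - 1) * ν) := by
        rw [Real.rpow_sub hμ, Real.rpow_one]
        field_simp
        ring

lemma klein (hY : Y.PosDef) (hX : X.PosDef) {q : ℝ} (hq0 : 0 < q) (hq1 : q ≤ 1) :
    (mpow X q).trace ≤ (1 - q) * (mpow Y q).trace + q * (mpow Y (q - 1) * X).trace := by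
  have hYh := hY.1
  have hXh := hX.1
  set U := (hYh.eigenvectorUnitary : Matrix (Fin k) (Fin k) ℝ) with hU
  set V := (hXh.eigenvectorUnitary : Matrix (Fin k) (Fin k) ℝ) with hV
  set W := star U * V with hW
  have hU'U : star U * U = 1 := Matrix.mem_unitaryGroup_iff'.mp hYh.eigenvectorUnitary.2
  have hVV : V * star V = 1 := Matrix.mem_unitaryGroup_iff.mp hXh.eigenvectorUnitary.2
  have hV'V : star V * V = 1 := Matrix.mem_unitaryGroup_iff'.mp hXh.eigenvectorUnitary.2
  have hUU : U * star U = 1 := Matrix.mem_unitaryGroup_iff.mp hYh.eigenvectorUnitary.2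
  have hWW : W * star W = 1 := by
    have h1 : W * star W = star U * (V * star V) * U := by
      simp only [hW, StarMul.star_mul, star_star, Matrix.mul_assoc]
    rw [h1, hVV, Matrix.mul_one, hU'U]
  have hW'W : star W * W = 1 := by
    have h1 : star W * W = star V * (U * star U) * V := by
      simp only [hW, StarMul.star_mul, star_star, Matrix.mul_assoc]
    rw [h1, hUU, Matrix.mul_one, hV'V]
  rw [show mpow X q = hXh.cfc (fun x => x ^ q) from dif_pos hXh,
      show mpow Y q = hYh.cfc (fun x => x ^ q) from dif_pos hYh,
      show mpow Y (q - 1) = hYh.cfc (fun x => x ^ (q - 1)) from dif_pos hYh]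
  have t1 : (hXh.cfc fun x => x ^ q).trace
      = ∑ i, ∑ j, (hXh.eigenvalues j) ^ q * (W i j)^2 := by
    conv_lhs => rw [← Matrix.one_mul (hXh.cfc fun x => x ^ q), ← cfc_rpow_zero hYh]
    rw [trace_cfc_mul_cfc]
    simp [Real.rpow_zero]
    rfl
  have t2 : (hYh.cfc fun x => x ^ q).trace
      = ∑ i, ∑ j, (hYh.eigenvalues i) ^ q * (W i j)^2 := by
    conv_lhs => rw [← Matrix.mul_one (hYh.cfc fun x => x ^ q), ← cfc_rpow_zero hXh]
    rw [trace_cfc_mul_cfc]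
    simp [Real.rpow_zero]
    rfl
  have t3 : ((hYh.cfc fun x => x ^ (q - 1)) * X).trace
      = ∑ i, ∑ j, (hYh.eigenvalues i) ^ (q - 1) * (hXh.eigenvalues j) * (W i j)^2 := by
    conv_lhs => rw [show X = hXh.cfc (fun x => x ^ (1:ℝ)) from (cfc_rpow_one hXh).symm]
    rw [trace_cfc_mul_cfc]
    simp [Real.rpow_one]
    rfl
  rw [t1, t2, t3]
  have key : ∀ i j, (hXh.eigenvalues j) ^ q * (W i j)^2
      ≤ ((1 - q) * (hYh.eigenvalues i) ^ q
          + q * ((hYh.eigenvalues i) ^ (q - 1) * (hXh.eigenvalues j))) * (W i j)^2 := by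
    intro i j
    exact mul_le_mul_of_nonneg_right
      (scalar_tangent (hY.eigenvalues_pos i) (hX.eigenvalues_pos j).le hq0 hq1) (sq_nonneg _)
  calc (∑ i, ∑ j, (hXh.eigenvalues j) ^ q * (W i j)^2)
      ≤ ∑ i, ∑ j, ((1 - q) * (hYh.eigenvalues i) ^ q
          + q * ((hYh.eigenvalues i) ^ (q - 1) * (hXh.eigenvalues j))) * (W i j)^2 :=
        Finset.sum_le_sum fun i _ => Finset.sum_le_sum fun j _ => key i j
    _ = (1 - q) * (∑ i, ∑ j, (hYh.eigenvalues i) ^ q * (W i j)^2)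
        + q * (∑ i, ∑ j, (hYh.eigenvalues i) ^ (q - 1) * (hXh.eigenvalues j) * (W i j)^2) := by
        simp only [add_mul, Finset.sum_add_distrib, Finset.mul_sum]
        congr 1
        · congr 1; funext i; congr 1; funext j; ring
        · congr 1; funext i; congr 1; funext j; ring

lemma conj_mul_conj {U D₁ D₂ : Matrix (Fin k) (Fin k) ℝ} (h : star U * U = 1) :
    (U * D₁ * star U) * (U * D₂ * star U) = U * (D₁ * D₂) * star U := by
  calc (U * D₁ * star U) * (U * D₂ * star U)
      = U * D₁ * (star U * U) * (D₂ * star U) := by simp only [Matrix.mul_assoc]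
    _ = U * (D₁ * D₂) * star U := by
        rw [h, Matrix.mul_one]; simp only [Matrix.mul_assoc]

lemma cfc_mul (hY : Y.IsHermitian) (f g : ℝ → ℝ) :
    hY.cfc f * hY.cfc g = hY.cfc (fun x => f x * g x) := by
  rw [cfc_real, cfc_real, cfc_real,
    conj_mul_conj (Matrix.mem_unitaryGroup_iff'.mp hY.eigenvectorUnitary.2),
    Matrix.diagonal_mul_diagonal]
  congr 1

lemma cfc_congr (hY : Y.IsHermitian) {f g : ℝ → ℝ}
    (h : ∀ i, f (hY.eigenvalues i) = g (hY.eigenvalues i)) : hY.cfc f = hY.cfc g := by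
  have hfg : f ∘ hY.eigenvalues = g ∘ hY.eigenvalues := funext h
  rw [cfc_real, cfc_real, hfg]

lemma cfc_isHermitian (hY : Y.IsHermitian) (f : ℝ → ℝ) : (hY.cfc f).IsHermitian := by
  rw [cfc_real]
  apply Matrix.isHermitian_mul_mul_conjTranspose
  simp [Matrix.IsHermitian, Matrix.diagonal_conjTranspose]

lemma mpow_eq {M : Matrix (Fin k) (Fin k) ℝ} (h : M.IsHermitian) (s : ℝ) :
    mpow M s = h.cfc (fun x => x ^ s) := dif_pos h

lemma mpow_transpose {M : Matrix (Fin k) (Fin k) ℝ} (h : M.IsHermitian) (s : ℝ) :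
    (mpow M s)ᵀ = mpow M s := by
  rw [mpow_eq h, ← Matrix.conjTranspose_eq_transpose_of_trivial]
  exact cfc_isHermitian h _

lemma mpow_mul_mpow {M : Matrix (Fin k) (Fin k) ℝ} (h : M.PosDef) (a b : ℝ) :
    mpow M a * mpow M b = mpow M (a + b) := by
  rw [mpow_eq h.1, mpow_eq h.1, mpow_eq h.1, cfc_mul]
  exact cfc_congr h.1 fun i => (Real.rpow_add (h.eigenvalues_pos i) a b).symm

lemma mpow_one {M : Matrix (Fin k) (Fin k) ℝ} (h : M.IsHermitian) :
    mpow M 1 = M := by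
  rw [mpow_eq h, cfc_rpow_one]

lemma mpow_mul_self {M : Matrix (Fin k) (Fin k) ℝ} (h : M.PosDef) (a : ℝ) :
    mpow M a * M = mpow M (a + 1) := by
  nth_rewrite 2 [← mpow_one h.1]
  exact mpow_mul_mpow h a 1

lemma mulVec_ne_zero {m r : ℕ} {K : Matrix (Fin m) (Fin r) ℝ} (hK : K.rank = r)
    {x : Fin r → ℝ} (hx : x ≠ 0) : K *ᵥ x ≠ 0 := by
  have h := LinearMap.finrank_range_add_finrank_ker K.mulVecLin
  rw [show Module.finrank ℝ ↥(LinearMap.range K.mulVecLin) = r from hK] at h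
  have hdom : Module.finrank ℝ (Fin r → ℝ) = r := by simp
  rw [hdom] at h
  have hker : LinearMap.ker K.mulVecLin = ⊥ := Submodule.finrank_eq_zero.mp (by omega)
  intro hKx
  apply hx
  have hmem : x ∈ LinearMap.ker K.mulVecLin := by
    simpa [Matrix.mulVecLin_apply] using hKx
  rw [hker] at hmem
  simpa using hmem

lemma posDef_conj {m r : ℕ} {P : Matrix (Fin m) (Fin m) ℝ} (hP : P.PosDef)
    {K : Matrix (Fin m) (Fin r) ℝ} (hK : K.rank = r) : (Kᵀ * P * K).PosDef := by
  rw [← Matrix.conjTranspose_eq_transpose_of_trivial]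
  refine hP.conjTranspose_mul_mul_same (B := K) fun x y hxy => ?_
  by_contra h
  exact mulVec_ne_zero hK (sub_ne_zero.mpr h) (by rw [Matrix.mulVec_sub, hxy, sub_self])

lemma transpose_eq_of_isHermitian {B : Matrix (Fin k) (Fin k) ℝ} (h : B.IsHermitian) :
    Bᵀ = B := by rw [← Matrix.conjTranspose_eq_transpose_of_trivial, h]

lemma trace_transpose_mul_prod {a b : ℕ} (B C : Matrix (Fin a) (Fin b) ℝ) :
    (Bᵀ * C).trace = ∑ x : Fin a × Fin b, B x.1 x.2 * C x.1 x.2 := by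
  simp only [Matrix.trace, Matrix.diag_apply, Matrix.mul_apply, Matrix.transpose_apply]
  rw [Finset.sum_comm, ← Finset.univ_product_univ, Finset.sum_product]

lemma sum_trace_form {n' m' r' : ℕ} (v : Fin n' → ℝ) (A : Fin n' → Matrix (Fin m') (Fin m') ℝ)
    (Z₁ : Matrix (Fin r') (Fin m') ℝ) (Z₂ : Matrix (Fin m') (Fin r') ℝ) :
    ∑ i, v i * (Z₁ * A i * Z₂).trace = (Z₁ * (∑ i, v i • A i) * Z₂).trace := by
  simp only [Matrix.mul_sum, Matrix.sum_mul, Matrix.trace_sum, Matrix.mul_smul,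
    Matrix.smul_mul, Matrix.trace_smul, smul_eq_mul]

end Aux

set_option maxHeartbeats 1000000 in
/-- Monotonicity of the multiplicative algorithm for
`φ_{p,K}(M) = -tr((Kᵀ M⁻¹ K)^{-p})`, `p ∈ [-1, 0)`, for every power
`lam ∈ (0,1]`. -/
theorem stmt_4 {n m r : ℕ} (hn : 0 < n) (hm : 0 < m) (hr : 0 < r) (hrm : r ≤ m)
    (A : Fin n → Matrix (Fin m) (Fin m) ℝ) (hA : ∀ i, (A i).PosSemidef)
    (M : (Fin n → ℝ) → Matrix (Fin m) (Fin m) ℝ)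
    (hM : ∀ v : Fin n → ℝ, M v = ∑ i, v i • A i)
    (p : ℝ) (hp1 : -1 ≤ p) (hp0 : p < 0)
    (K : Matrix (Fin m) (Fin r) ℝ) (hK : K.rank = r)
    (w : Fin n → ℝ) (hw : ∀ i, 0 < w i) (hw1 : ∑ i, w i = 1)
    (lam : ℝ) (hlam0 : 0 < lam) (hlam1 : lam ≤ 1)
    (d : Fin n → ℝ)
    (hd : ∀ i, d i =
      ((M w)⁻¹ * K * mpow (Kᵀ * (M w)⁻¹ * K) (-p - 1) * Kᵀ * (M w)⁻¹ * A i).trace)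
    (w' : Fin n → ℝ)
    (hw' : ∀ i, w' i = w i * d i ^ lam / ∑ j, w j * d j ^ lam)
    (hMwpos : (M w).PosDef) (hMw'pos : (M w').PosDef)
    (hdne : ∃ i, d i ≠ 0) :
    (mpow (Kᵀ * (M w')⁻¹ * K) (-p)).trace ≤ (mpow (Kᵀ * (M w)⁻¹ * K) (-p)).trace := by
  classical
  set q : ℝ := -p with hqdef
  have hq0 : 0 < q := neg_pos.mpr hp0
  have hq1 : q ≤ 1 := by rw [hqdef]; linarith
  have hMinv : ((M w)⁻¹).PosDef := hMwpos.inv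
  have hM'inv : ((M w')⁻¹).PosDef := hMw'pos.inv
  set Y := Kᵀ * (M w)⁻¹ * K with hYdef
  set X := Kᵀ * (M w')⁻¹ * K with hXdef
  have hYpd : Y.PosDef := Aux.posDef_conj hMinv hK
  have hXpd : X.PosDef := Aux.posDef_conj hM'inv hK
  set E := mpow Y ((q - 1) / 2) with hEdef
  set L := K * E with hLdef
  have hEE : E * E = mpow Y (q - 1) := by
    rw [hEdef, Aux.mpow_mul_mpow hYpd]; norm_num
  have hEt : Eᵀ = E := Aux.mpow_transpose hYpd.1 _
  have hMinvT : ((M w)⁻¹)ᵀ = (M w)⁻¹ := Aux.transpose_eq_of_isHermitian hMinv.1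
  have hM'invT : ((M w')⁻¹)ᵀ = (M w')⁻¹ := Aux.transpose_eq_of_isHermitian hM'inv.1
  have hLT : Lᵀ = E * Kᵀ := by rw [hLdef, Matrix.transpose_mul, hEt]
  have hMu : M w * (M w)⁻¹ = 1 := Matrix.mul_nonsing_inv _ hMwpos.det_pos.ne'.isUnit
  have hM'u : M w' * (M w')⁻¹ = 1 := Matrix.mul_nonsing_inv _ hMw'pos.det_pos.ne'.isUnit
  set c : Fin n → ℝ := fun i => (Lᵀ * (M w')⁻¹ * A i * ((M w)⁻¹ * L)).trace with hcdef
  set e : Fin n → ℝ := fun i => (Lᵀ * (M w')⁻¹ * A i * ((M w')⁻¹ * L)).trace with hedef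
  have hsqrt : ∀ i, ((hA i).1.cfc Real.sqrt) * ((hA i).1.cfc Real.sqrt) = A i := fun i =>
    (Aux.cfc_mul _ _ _).trans ((Aux.cfc_congr (hA i).1 fun j => by
      simp only [Real.rpow_one]; exact Real.mul_self_sqrt ((hA i).eigenvalues_nonneg j)).trans
      (Aux.cfc_rpow_one (hA i).1))
  have hsqrtT : ∀ i, (((hA i).1.cfc Real.sqrt))ᵀ = ((hA i).1.cfc Real.sqrt) := fun i =>
    Aux.transpose_eq_of_isHermitian (Aux.cfc_isHermitian _ _)
  have hd2 : ∀ i, d i = (Lᵀ * (M w)⁻¹ * A i * ((M w)⁻¹ * L)).trace := by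
    intro i
    rw [hd i]
    have h1 : (M w)⁻¹ * K * mpow Y (q - 1) * Kᵀ * (M w)⁻¹ * A i
        = ((M w)⁻¹ * L) * (Lᵀ * (M w)⁻¹ * A i) := by
      rw [← hEE, hLT, hLdef]
      simp only [Matrix.mul_assoc]
    rw [h1, Matrix.trace_mul_comm]
  have form : ∀ (N₁ N₂ : Matrix (Fin m) (Fin m) ℝ), N₁ᵀ = N₁ → ∀ i,
      (Lᵀ * N₁ * A i * (N₂ * L)).trace
        = ∑ x : Fin m × Fin r, (((hA i).1.cfc Real.sqrt) * (N₁ * L)) x.1 x.2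
            * (((hA i).1.cfc Real.sqrt) * (N₂ * L)) x.1 x.2 := by
    intro N₁ N₂ h₁ i
    rw [← Aux.trace_transpose_mul_prod]
    congr 1
    symm
    calc (((hA i).1.cfc Real.sqrt) * (N₁ * L))ᵀ * (((hA i).1.cfc Real.sqrt) * (N₂ * L))
        = (Lᵀ * N₁) * (((hA i).1.cfc Real.sqrt) * ((hA i).1.cfc Real.sqrt)) * (N₂ * L) := by
          rw [Matrix.transpose_mul, Matrix.transpose_mul, hsqrtT i, h₁]
          simp only [Matrix.mul_assoc]
      _ = Lᵀ * N₁ * A i * (N₂ * L) := by rw [hsqrt i]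
  have he0 : ∀ i, 0 ≤ e i := by
    intro i
    rw [hedef]
    simp only
    rw [form _ _ hM'invT i]
    exact Finset.sum_nonneg fun x _ => mul_self_nonneg _
  have hd0 : ∀ i, 0 ≤ d i := by
    intro i
    rw [hd2 i, form _ _ hMinvT i]
    exact Finset.sum_nonneg fun x _ => mul_self_nonneg _
  have hcs : ∀ i, c i ≤ Real.sqrt (d i * e i) := by
    intro i
    have h2 : c i ^ 2 ≤ e i * d i := by
      rw [hcdef]
      simp only
      rw [form _ _ hM'invT i, hd2 i, form _ _ hMinvT i, hedef]
      simp only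
      rw [form _ _ hM'invT i]
      have := Finset.sum_mul_sq_le_sq_mul_sq Finset.univ
        (fun x : Fin m × Fin r => (((hA i).1.cfc Real.sqrt) * ((M w')⁻¹ * L)) x.1 x.2)
        (fun x : Fin m × Fin r => (((hA i).1.cfc Real.sqrt) * ((M w)⁻¹ * L)) x.1 x.2)
      simpa [pow_two] using this
    rw [mul_comm]
    exact Real.le_sqrt_of_sq_le h2
  have hsumc : ∑ i, w i * c i = (Lᵀ * (M w')⁻¹ * L).trace := by
    simp only [hcdef]
    rw [Aux.sum_trace_form w A (Lᵀ * (M w')⁻¹) ((M w)⁻¹ * L), ← hM w]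
    congr 1
    rw [Matrix.mul_assoc (Lᵀ * (M w')⁻¹) (M w) ((M w)⁻¹ * L),
      ← Matrix.mul_assoc (M w) (M w)⁻¹ L, hMu, Matrix.one_mul]
  have hsumd : ∑ i, w i * d i = (Lᵀ * (M w)⁻¹ * L).trace := by
    have h0 : ∑ i, w i * d i = ∑ i, w i * (Lᵀ * (M w)⁻¹ * A i * ((M w)⁻¹ * L)).trace :=
      Finset.sum_congr rfl fun i _ => by rw [hd2 i]
    rw [h0, Aux.sum_trace_form w A (Lᵀ * (M w)⁻¹) ((M w)⁻¹ * L), ← hM w]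
    congr 1
    rw [Matrix.mul_assoc (Lᵀ * (M w)⁻¹) (M w) ((M w)⁻¹ * L),
      ← Matrix.mul_assoc (M w) (M w)⁻¹ L, hMu, Matrix.one_mul]
  have hsume : ∑ i, w' i * e i = (Lᵀ * (M w')⁻¹ * L).trace := by
    simp only [hedef]
    rw [Aux.sum_trace_form w' A (Lᵀ * (M w')⁻¹) ((M w')⁻¹ * L), ← hM w']
    congr 1
    rw [Matrix.mul_assoc (Lᵀ * (M w')⁻¹) (M w') ((M w')⁻¹ * L),
      ← Matrix.mul_assoc (M w') (M w')⁻¹ L, hM'u, Matrix.one_mul]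
  have hTX : (Lᵀ * (M w')⁻¹ * L).trace = (mpow Y (q - 1) * X).trace := by
    have h1 : Lᵀ * (M w')⁻¹ * L = E * (X * E) := by
      rw [hLT, hLdef, hXdef]; simp only [Matrix.mul_assoc]
    rw [h1, Matrix.trace_mul_comm, Matrix.mul_assoc, hEE, Matrix.trace_mul_comm]
  have hDY : (Lᵀ * (M w)⁻¹ * L).trace = (mpow Y q).trace := by
    have h1 : Lᵀ * (M w)⁻¹ * L = E * (Y * E) := by
      rw [hLT, hLdef, hYdef]; simp only [Matrix.mul_assoc]
    rw [h1, Matrix.trace_mul_comm, Matrix.mul_assoc, hEE, Matrix.trace_mul_comm,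
      Aux.mpow_mul_self hYpd, show q - 1 + 1 = q by ring]
  set T := (Lᵀ * (M w')⁻¹ * L).trace with hTdef
  set S := ∑ j, w j * d j ^ lam with hSdef
  have hSpos : 0 < S := by
    obtain ⟨i0, hi0⟩ := hdne
    have hdi0 : 0 < d i0 := (hd0 i0).lt_of_ne (Ne.symm hi0)
    exact Finset.sum_pos'
      (fun i _ => mul_nonneg (hw i).le (Real.rpow_nonneg (hd0 i) lam))
      ⟨i0, Finset.mem_univ _, mul_pos (hw i0) (Real.rpow_pos_of_pos hdi0 lam)⟩
  have hSe : ∑ i, w i * d i ^ lam * e i = S * T := by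
    calc ∑ i, w i * d i ^ lam * e i = ∑ i, S * (w' i * e i) := by
          refine Finset.sum_congr rfl fun i _ => ?_
          rw [hw' i]
          field_simp
      _ = S * ∑ i, w' i * e i := by rw [Finset.mul_sum]
      _ = S * T := by rw [hsume]
  have hT0 : 0 ≤ T := by
    have h1 : 0 ≤ ∑ i, w i * d i ^ lam * e i :=
      Finset.sum_nonneg fun i _ =>
        mul_nonneg (mul_nonneg (hw i).le (Real.rpow_nonneg (hd0 i) lam)) (he0 i)
    rw [hSe] at h1
    exact (mul_le_mul_iff_right₀ hSpos).mp (by simpa using h1)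
  have hsplit : ∀ {x : ℝ}, 0 ≤ x → x ^ (1 - lam) * x ^ lam = x := by
    intro x hx
    rcases hx.eq_or_lt' with h | h
    · subst h
      rw [Real.zero_rpow hlam0.ne', mul_zero]
    · rw [← Real.rpow_add h, sub_add_cancel, Real.rpow_one]
  have hRsq : (∑ i, w i * Real.sqrt (d i * e i)) ^ 2
      ≤ (∑ i, w i * d i ^ (1 - lam)) * (∑ i, w i * d i ^ lam * e i) := by
    refine Finset.sum_sq_le_sum_mul_sum_of_sq_eq_mul Finset.univ
      (fun i _ => mul_nonneg (hw i).le (Real.rpow_nonneg (hd0 i) _))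
      (fun i _ => mul_nonneg (mul_nonneg (hw i).le (Real.rpow_nonneg (hd0 i) _)) (he0 i))
      (fun i _ => ?_)
    rw [mul_pow, Real.sq_sqrt (mul_nonneg (hd0 i) (he0 i))]
    have hi := hsplit (hd0 i)
    linear_combination (-(w i ^ 2) * e i) * hi
  have hTle : T ≤ ∑ i, w i * Real.sqrt (d i * e i) := by
    rw [← hsumc]
    exact Finset.sum_le_sum fun i _ => mul_le_mul_of_nonneg_left (hcs i) (hw i).le
  have cheb : S * (∑ i, w i * d i ^ (1 - lam)) ≤ ∑ i, w i * d i := by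
    have key : 0 ≤ ∑ i, ∑ j, w i * w j *
        ((d i ^ lam - d j ^ lam) * (d i ^ (1 - lam) - d j ^ (1 - lam))) := by
      refine Finset.sum_nonneg fun i _ => Finset.sum_nonneg fun j _ => ?_
      refine mul_nonneg (mul_nonneg (hw i).le (hw j).le) ?_
      rcases le_total (d i) (d j) with h | h
      · have h1 : d i ^ lam ≤ d j ^ lam := Real.rpow_le_rpow (hd0 i) h hlam0.le
        have h2 : d i ^ (1 - lam) ≤ d j ^ (1 - lam) := Real.rpow_le_rpow (hd0 i) h (by linarith)
        nlinarith [mul_nonneg (sub_nonneg.mpr h1) (sub_nonneg.mpr h2)]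
      · have h1 : d j ^ lam ≤ d i ^ lam := Real.rpow_le_rpow (hd0 j) h hlam0.le
        have h2 : d j ^ (1 - lam) ≤ d i ^ (1 - lam) := Real.rpow_le_rpow (hd0 j) h (by linarith)
        exact mul_nonneg (by linarith) (by linarith)
    have e1 : ∀ i j : Fin n, w i * w j *
        ((d i ^ lam - d j ^ lam) * (d i ^ (1 - lam) - d j ^ (1 - lam)))
        = (w i * d i) * w j + w i * (w j * d j)
          - (w i * d i ^ lam) * (w j * d j ^ (1 - lam))
          - (w i * d i ^ (1 - lam)) * (w j * d j ^ lam) := by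
      intro i j
      have hi := hsplit (hd0 i)
      have hj := hsplit (hd0 j)
      linear_combination (w i * w j) * hi + (w i * w j) * hj
    have expand : ∑ i, ∑ j, w i * w j *
        ((d i ^ lam - d j ^ lam) * (d i ^ (1 - lam) - d j ^ (1 - lam)))
        = 2 * (∑ i, w i * d i) - 2 * (S * ∑ i, w i * d i ^ (1 - lam)) := by
      rw [Finset.sum_congr rfl fun i _ => Finset.sum_congr rfl fun j _ => e1 i j]
      simp only [Finset.sum_sub_distrib, Finset.sum_add_distrib, ← Finset.mul_sum,
        ← Finset.sum_mul, hw1]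
      ring
    rw [expand] at key
    linarith
  have hTD : T ≤ ∑ i, w i * d i := by
    rcases hT0.eq_or_lt' with h | h
    · rw [h]
      exact Finset.sum_nonneg fun i _ => mul_nonneg (hw i).le (hd0 i)
    · set B := ∑ i, w i * d i ^ (1 - lam) with hBdef
      have h1 : T ^ 2 ≤ B * (S * T) := by
        calc T ^ 2 ≤ (∑ i, w i * Real.sqrt (d i * e i)) ^ 2 := pow_le_pow_left₀ hT0 hTle 2
          _ ≤ B * (∑ i, w i * d i ^ lam * e i) := hRsq
          _ = B * (S * T) := by rw [hSe]
      have h2 : T ≤ B * S := by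
        apply le_of_mul_le_mul_right _ h
        calc T * T = T ^ 2 := (sq T).symm
          _ ≤ B * (S * T) := h1
          _ = B * S * T := by ring
      calc T ≤ B * S := h2
        _ = S * B := mul_comm _ _
        _ ≤ ∑ i, w i * d i := cheb
  have hkl := Aux.klein hYpd hXpd hq0 hq1
  have hDsum : (mpow Y q).trace = ∑ i, w i * d i := by rw [hsumd, hDY]
  have hTD' : T ≤ (mpow Y q).trace := by rw [hDsum]; exact hTD
  calc (mpow X q).trace
      ≤ (1 - q) * (mpow Y q).trace + q * (mpow Y (q - 1) * X).trace := hkl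
    _ = (1 - q) * (mpow Y q).trace + q * T := by rw [← hTX]
    _ ≤ (1 - q) * (mpow Y q).trace + q * (mpow Y q).trace := by
        have := mul_le_mul_of_nonneg_left hTD' hq0.le
        linarith
    _ = (mpow Y q).trace := by ring
end

section
/- Let c ∈ ℝ^m be a nonzero vector, let w be a probability vector with w_i > 0 for all i, let λ ∈ (0,1], set d_i(w) = cᵀ M(w)^{-1} A_i M(w)^{-1} c, and define w'_i = w_i d_i(w)^λ / Σ_j w_j d_j(w)^λ. If M(w) and M(w') are both positive definite, then cᵀ M(w')^{-1} c ≤ cᵀ M(w)^{-1} c. (Monotonicity of the multiplicative algorithm for the c-criterion φ_{-1,c}(M) = -cᵀ M^{-1} c.) -/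
open Matrix

lemma quadSum {n m : ℕ} (A : Fin n → Matrix (Fin m) (Fin m) ℝ) (v : Fin n → ℝ)
    (x z : Fin m → ℝ) :
    x ⬝ᵥ (∑ i, v i • A i) *ᵥ z = ∑ i, v i * (x ⬝ᵥ (A i) *ᵥ z) := by
  simp only [dotProduct, mulVec, Finset.sum_apply, Matrix.sum_apply, Pi.smul_apply,
    Matrix.smul_apply, smul_eq_mul, Finset.sum_mul, Finset.mul_sum]
  refine Eq.trans (Finset.sum_congr rfl fun y _ => Finset.sum_comm) ?_
  rw [Finset.sum_comm]
  refine Finset.sum_congr rfl fun i _ => ?_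
  refine Finset.sum_congr rfl fun k _ => Finset.sum_congr rfl fun j _ => ?_
  ring

open scoped MatrixOrder in
lemma cs_psd {m : ℕ} {A : Matrix (Fin m) (Fin m) ℝ} (hA : A.PosSemidef) (x y : Fin m → ℝ) :
    (x ⬝ᵥ A *ᵥ y) ^ 2 ≤ (x ⬝ᵥ A *ᵥ x) * (y ⬝ᵥ A *ᵥ y) := by
  classical
  set B := CFC.sqrt A with hB
  have hBB : B * B = A := CFC.sqrt_mul_sqrt_self A hA.nonneg
  have hBsym : Bᵀ = B := by
    have := (CFC.sqrt_nonneg A).posSemidef.1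
    rwa [IsHermitian, conjTranspose_eq_transpose_of_trivial] at this
  have key : ∀ u v : Fin m → ℝ, u ⬝ᵥ A *ᵥ v = (B *ᵥ u) ⬝ᵥ (B *ᵥ v) := by
    intro u v
    rw [← hBB, ← Matrix.mulVec_mulVec, Matrix.dotProduct_mulVec]
    congr 1
    calc u ᵥ* B = u ᵥ* Bᵀ := by rw [hBsym]
      _ = B *ᵥ u := Matrix.vecMul_transpose _ _
  rw [key x y, key x x, key y y]
  simpa [dotProduct, pow_two] using
    Finset.sum_mul_sq_le_sq_mul_sq Finset.univ (B *ᵥ x) (B *ᵥ y)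

lemma cheb {n : ℕ} (w f g : Fin n → ℝ) (hw : ∀ i, 0 ≤ w i)
    (h : ∀ i j, 0 ≤ (f i - f j) * (g i - g j)) :
    (∑ i, w i * f i) * (∑ i, w i * g i) ≤ (∑ i, w i) * (∑ i, w i * (f i * g i)) := by
  have key : (0:ℝ) ≤ ∑ i, ∑ j, w i * w j * ((f i - f j) * (g i - g j)) :=
    Finset.sum_nonneg fun i _ => Finset.sum_nonneg fun j _ =>
      mul_nonneg (mul_nonneg (hw i) (hw j)) (h i j)
  have e1 : (∑ i, w i) * (∑ i, w i * (f i * g i))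
      = ∑ i, ∑ j, w i * (w j * (f j * g j)) := Finset.sum_mul_sum _ _ _ _
  have e2 : (∑ i, w i * f i) * (∑ i, w i * g i)
      = ∑ i, ∑ j, (w i * f i) * (w j * g j) := Finset.sum_mul_sum _ _ _ _
  have e3 : (∑ i, w i * (f i * g i)) * (∑ i, w i)
      = ∑ i, ∑ j, (w i * (f i * g i)) * w j := Finset.sum_mul_sum _ _ _ _
  have e4 : (∑ i, w i * g i) * (∑ i, w i * f i)
      = ∑ i, ∑ j, (w i * g i) * (w j * f j) := Finset.sum_mul_sum _ _ _ _
  have expand : ∑ i, ∑ j, w i * w j * ((f i - f j) * (g i - g j))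
      = ∑ i, ∑ j, (w i * (w j * (f j * g j)) + (w i * (f i * g i)) * w j
          - (w i * f i) * (w j * g j) - (w i * g i) * (w j * f j)) := by
    apply Finset.sum_congr rfl; intro i _
    apply Finset.sum_congr rfl; intro j _
    ring
  rw [expand] at key
  simp only [Finset.sum_add_distrib, Finset.sum_sub_distrib] at key
  rw [← e1, ← e2, ← e3, ← e4] at key
  nlinarith [key]
/-- Monotonicity of the multiplicative algorithm for the c-criterion
`φ_{-1,c}(M) = -cᵀ M⁻¹ c`, for every power `lam ∈ (0,1]`. -/
theorem stmt_5 {n m : ℕ} (hn : 0 < n) (hm : 0 < m)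
    (A : Fin n → Matrix (Fin m) (Fin m) ℝ) (hA : ∀ i, (A i).PosSemidef)
    (M : (Fin n → ℝ) → Matrix (Fin m) (Fin m) ℝ)
    (hM : ∀ v : Fin n → ℝ, M v = ∑ i, v i • A i)
    (c : Fin m → ℝ) (hc : c ≠ 0)
    (w : Fin n → ℝ) (hw : ∀ i, 0 < w i) (hw1 : ∑ i, w i = 1)
    (lam : ℝ) (hlam0 : 0 < lam) (hlam1 : lam ≤ 1)
    (d : Fin n → ℝ)
    (hd : ∀ i, d i = c ⬝ᵥ ((M w)⁻¹ * A i * (M w)⁻¹) *ᵥ c)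
    (w' : Fin n → ℝ)
    (hw' : ∀ i, w' i = w i * d i ^ lam / ∑ j, w j * d j ^ lam)
    (hMwpos : (M w).PosDef) (hMw'pos : (M w').PosDef) :
    c ⬝ᵥ (M w')⁻¹ *ᵥ c ≤ c ⬝ᵥ (M w)⁻¹ *ᵥ c := by
  classical
  set y := (M w)⁻¹ *ᵥ c with hy
  set x := (M w')⁻¹ *ᵥ c with hx
  have hdetw : IsUnit (M w).det := hMwpos.det_pos.ne'.isUnit
  have hdetw' : IsUnit (M w').det := hMw'pos.det_pos.ne'.isUnit
  have hMy : (M w) *ᵥ y = c := by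
    rw [hy, Matrix.mulVec_mulVec, Matrix.mul_nonsing_inv _ hdetw, Matrix.one_mulVec]
  have hM'x : (M w') *ᵥ x = c := by
    rw [hx, Matrix.mulVec_mulVec, Matrix.mul_nonsing_inv _ hdetw', Matrix.one_mulVec]
  have hsyminv : ((M w)⁻¹)ᵀ = (M w)⁻¹ := by
    have := hMwpos.1.inv
    rwa [Matrix.IsHermitian, conjTranspose_eq_transpose_of_trivial] at this
  -- d i as quadratic form in y
  have hdy : ∀ i, d i = y ⬝ᵥ (A i) *ᵥ y := by
    intro i
    rw [hd i, ← Matrix.mulVec_mulVec, ← Matrix.mulVec_mulVec, Matrix.dotProduct_mulVec]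
    congr 1
    calc c ᵥ* (M w)⁻¹ = c ᵥ* ((M w)⁻¹)ᵀ := by rw [hsyminv]
      _ = (M w)⁻¹ *ᵥ c := Matrix.vecMul_transpose _ _
  have hd0 : ∀ i, 0 ≤ d i := by
    intro i
    rw [hdy i]
    simpa using (hA i).dotProduct_mulVec_nonneg y
  set α : Fin n → ℝ := fun i => x ⬝ᵥ (A i) *ᵥ x with hα
  set γ : Fin n → ℝ := fun i => x ⬝ᵥ (A i) *ᵥ y with hγ
  have hα0 : ∀ i, 0 ≤ α i := by
    intro i
    simpa [hα] using (hA i).dotProduct_mulVec_nonneg x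
  have hcs : ∀ i, γ i ^ 2 ≤ α i * d i := by
    intro i
    rw [hdy i]
    exact cs_psd (hA i) x y
  -- the two representations of the objective values
  have hP : c ⬝ᵥ y = ∑ i, w i * d i := by
    calc c ⬝ᵥ y = y ⬝ᵥ c := dotProduct_comm _ _
      _ = y ⬝ᵥ (M w) *ᵥ y := by rw [hMy]
      _ = ∑ i, w i * (y ⬝ᵥ (A i) *ᵥ y) := by rw [hM w]; exact quadSum A w y y
      _ = ∑ i, w i * d i := by
          exact Finset.sum_congr rfl fun i _ => by rw [hdy i]
  have hQγ : c ⬝ᵥ x = ∑ i, w i * γ i := by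
    calc c ⬝ᵥ x = x ⬝ᵥ c := dotProduct_comm _ _
      _ = x ⬝ᵥ (M w) *ᵥ y := by rw [hMy]
      _ = ∑ i, w i * γ i := by rw [hM w]; exact quadSum A w x y
  have hQα : c ⬝ᵥ x = ∑ i, w' i * α i := by
    calc c ⬝ᵥ x = x ⬝ᵥ c := dotProduct_comm _ _
      _ = x ⬝ᵥ (M w') *ᵥ x := by rw [hM'x]
      _ = ∑ i, w' i * α i := by rw [hM w']; exact quadSum A w' x x
  have hPpos : 0 < c ⬝ᵥ y := by simpa using hMwpos.inv.dotProduct_mulVec_pos hc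
  have hQpos : 0 < c ⬝ᵥ x := by simpa using hMw'pos.inv.dotProduct_mulVec_pos hc
  set S := ∑ j, w j * d j ^ lam with hS
  have hex : ∃ i, 0 < d i := by
    by_contra hco
    push_neg at hco
    have hz : ∀ i, d i = 0 := fun i => le_antisymm (hco i) (hd0 i)
    rw [hP] at hPpos
    simp [hz] at hPpos
  have hSpos : 0 < S := by
    obtain ⟨i, hi⟩ := hex
    exact Finset.sum_pos' (fun j _ => mul_nonneg (hw j).le (Real.rpow_nonneg (hd0 j) _))
      ⟨i, Finset.mem_univ i, mul_pos (hw i) (Real.rpow_pos_of_pos hi _)⟩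
  have hw'0 : ∀ i, 0 ≤ w' i := fun i => by
    rw [hw' i]
    exact div_nonneg (mul_nonneg (hw i).le (Real.rpow_nonneg (hd0 i) _)) hSpos.le
  set s : Finset (Fin n) := Finset.univ.filter (fun i => 0 < d i) with hs
  have hw'pos : ∀ i ∈ s, 0 < w' i := by
    intro i hi
    rw [Finset.mem_filter] at hi
    rw [hw' i]
    exact div_pos (mul_pos (hw i) (Real.rpow_pos_of_pos hi.2 _)) hSpos
  -- γ vanishes outside s
  have hγ0 : ∀ i, i ∉ s → γ i = 0 := by
    intro i hi
    simp only [hs, Finset.mem_filter, Finset.mem_univ, true_and, not_lt] at hi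
    have hdi : d i = 0 := le_antisymm hi (hd0 i)
    have := hcs i
    rw [hdi, mul_zero] at this
    have := le_antisymm this (sq_nonneg _)
    exact pow_eq_zero_iff two_ne_zero |>.1 this
  set r : Fin n → ℝ := fun i => w i * Real.sqrt (α i * d i) with hr
  set f : Fin n → ℝ := fun i => w' i * α i with hf
  set g : Fin n → ℝ := fun i => w i ^ 2 * d i / w' i with hg
  have hr2 : ∀ i ∈ s, r i ^ 2 = f i * g i := by
    intro i hi
    have hwi' := hw'pos i hi
    have hdi : 0 < d i := (Finset.mem_filter.1 hi).2
    rw [hr, hf, hg]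
    simp only
    rw [mul_pow, Real.sq_sqrt (mul_nonneg (hα0 i) (hd0 i))]
    field_simp [(hw i).ne', hwi'.ne']
  have hmain : (∑ i ∈ s, r i) ^ 2 ≤ (∑ i ∈ s, f i) * (∑ i ∈ s, g i) :=
    Finset.sum_sq_le_sum_mul_sum_of_sq_eq_mul s
      (fun i hi => mul_nonneg (hw'0 i) (hα0 i))
      (fun i hi => div_nonneg (mul_nonneg (sq_nonneg _) (hd0 i)) (hw'pos i hi).le)
      hr2
  -- Q ≤ ∑ r over s
  have hQr : c ⬝ᵥ x ≤ ∑ i ∈ s, r i := by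
    rw [hQγ]
    have hsub : ∑ i, w i * γ i = ∑ i ∈ s, w i * γ i := by
      refine (Finset.sum_subset (Finset.subset_univ s) ?_).symm
      intro i _ hi
      rw [hγ0 i hi, mul_zero]
    rw [hsub]
    apply Finset.sum_le_sum
    intro i _
    have hγle : γ i ≤ Real.sqrt (α i * d i) := by
      calc γ i ≤ |γ i| := le_abs_self _
        _ = Real.sqrt (γ i ^ 2) := (Real.sqrt_sq_eq_abs _).symm
        _ ≤ Real.sqrt (α i * d i) := Real.sqrt_le_sqrt (hcs i)
    exact mul_le_mul_of_nonneg_left hγle (hw i).le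
  have hfQ : ∑ i ∈ s, f i ≤ c ⬝ᵥ x := by
    rw [hQα]
    exact Finset.sum_le_sum_of_subset_of_nonneg (Finset.subset_univ s)
      (fun i _ _ => mul_nonneg (hw'0 i) (hα0 i))
  -- ∑ g over s  = S * ∑_{s} w d^{1-lam} ≤ S * ∑ w d^{1-lam} ≤ P
  have hgS : ∀ i ∈ s, g i = S * (w i * d i ^ (1 - lam)) := by
    intro i hi
    rw [Finset.mem_filter] at hi
    have hdi := hi.2
    have hrw : d i ^ (1 - lam) = d i / d i ^ lam := by
      rw [Real.rpow_sub hdi, Real.rpow_one]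
    rw [hg]
    simp only
    rw [hw' i, hrw]
    have h1 : d i ^ lam ≠ 0 := (Real.rpow_pos_of_pos hdi _).ne'
    field_simp [(hw i).ne', h1]
  have hgsum : ∑ i ∈ s, g i ≤ c ⬝ᵥ y := by
    rw [Finset.sum_congr rfl hgS, ← Finset.mul_sum]
    have h2 : ∑ i ∈ s, w i * d i ^ (1 - lam) ≤ ∑ i, w i * d i ^ (1 - lam) :=
      Finset.sum_le_sum_of_subset_of_nonneg (Finset.subset_univ s)
        (fun i _ _ => mul_nonneg (hw i).le (Real.rpow_nonneg (hd0 i) _))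
    have h3 : S * ∑ i, w i * d i ^ (1 - lam) ≤ c ⬝ᵥ y := by
      rw [hP]
      have hcheb := cheb w (fun i => d i ^ lam) (fun i => d i ^ (1 - lam)) (fun i => (hw i).le) ?_
      · rw [hw1, one_mul] at hcheb
        refine le_trans hcheb (le_of_eq ?_)
        refine Finset.sum_congr rfl fun i _ => ?_
        show w i * (d i ^ lam * d i ^ (1 - lam)) = w i * d i
        congr 1
        rcases (hd0 i).eq_or_lt with h | h
        · rw [← h, Real.zero_rpow hlam0.ne', zero_mul]
        · rw [← Real.rpow_add h, show lam + (1 - lam) = 1 by ring, Real.rpow_one]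
      · intro i j
        rcases le_total (d i) (d j) with h | h
        · have h1 := sub_nonneg.2 (Real.rpow_le_rpow (hd0 i) h hlam0.le)
          have h2 := sub_nonneg.2 (Real.rpow_le_rpow (hd0 i) h (by linarith : (0:ℝ) ≤ 1 - lam))
          nlinarith
        · have h1 := sub_nonneg.2 (Real.rpow_le_rpow (hd0 j) h hlam0.le)
          have h2 := sub_nonneg.2 (Real.rpow_le_rpow (hd0 j) h (by linarith : (0:ℝ) ≤ 1 - lam))
          nlinarith
    calc S * ∑ i ∈ s, w i * d i ^ (1 - lam) ≤ S * ∑ i, w i * d i ^ (1 - lam) :=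
          mul_le_mul_of_nonneg_left h2 hSpos.le
      _ ≤ c ⬝ᵥ y := h3
  -- put everything together
  have hg0 : 0 ≤ ∑ i ∈ s, g i :=
    Finset.sum_nonneg fun i hi => div_nonneg (mul_nonneg (sq_nonneg _) (hd0 i)) (hw'pos i hi).le
  have hr0 : 0 ≤ ∑ i ∈ s, r i :=
    Finset.sum_nonneg fun i _ => mul_nonneg (hw i).le (Real.sqrt_nonneg _)
  have hQ2 : (c ⬝ᵥ x) ^ 2 ≤ (∑ i ∈ s, r i) ^ 2 := pow_le_pow_left₀ hQpos.le hQr 2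
  have hfin : (c ⬝ᵥ x) ^ 2 ≤ (c ⬝ᵥ x) * (c ⬝ᵥ y) :=
    le_trans (le_trans hQ2 hmain) (mul_le_mul hfQ hgsum hg0 hQpos.le)
  nlinarith [hfin, hQpos]
end

section
/- Let m ≥ 2, let z_1, …, z_n ∈ ℝ^{m-1}, and set x_i = (1, z_iᵀ)ᵀ ∈ ℝ^m and A_i = x_i x_iᵀ. Let w be a probability vector with w_i > 0 for all i, put z̄ = Σ_i w_i z_i and M_c(w) = Σ_i w_i (z_i - z̄)(z_i - z̄)ᵀ, and suppose M(w) is positive definite. Define w'_i = w_i · (z_i - z̄)ᵀ M_c(w)^{-1} (z_i - z̄) / (m - 1). Then w' is a probability vector and det M(w') ≥ det M(w). (Titterington's conjecture: monotonicity of the iteration (alg2) for D-optimality of the non-intercept coefficients in a linear model.) -/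
open Matrix
set_option linter.unusedSectionVars false
set_option maxHeartbeats 1000000

namespace TittAux

open scoped MatrixOrder

variable {m : Type*} [Fintype m] [DecidableEq m]


variable {m : Type*} [Fintype m] [DecidableEq m]

lemma sum_mulVec' {ι : Type*} (s : Finset ι) (A : ι → Matrix m m ℝ) (x : m → ℝ) :
    (∑ i ∈ s, A i) *ᵥ x = ∑ i ∈ s, A i *ᵥ x := by
  funext j
  simp only [mulVec, dotProduct, Finset.sum_apply, Matrix.sum_apply, Finset.sum_mul]
  rw [Finset.sum_comm]

lemma vmv_mulVec (a b u : m → ℝ) : vecMulVec a b *ᵥ u = (b ⬝ᵥ u) • a := by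
  funext i
  simp [vecMulVec_apply, mulVec, dotProduct, Finset.sum_mul, Finset.mul_sum, mul_comm, mul_assoc,
    mul_left_comm]

lemma mul_vmv (N : Matrix m m ℝ) (a b : m → ℝ) :
    N * vecMulVec a b = vecMulVec (N *ᵥ a) b := by
  ext i j
  simp only [mul_apply, vecMulVec_apply, mulVec, dotProduct, Finset.sum_mul]
  exact Finset.sum_congr rfl fun x _ => by ring

lemma vmv_mul (N : Matrix m m ℝ) (a b : m → ℝ) :
    vecMulVec a b * N = vecMulVec a (Nᵀ *ᵥ b) := by
  ext i j
  simp only [mul_apply, vecMulVec_apply, mulVec, dotProduct, Finset.mul_sum, transpose_apply]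
  exact Finset.sum_congr rfl fun x _ => by ring

lemma transpose_vmv (a b : m → ℝ) : (vecMulVec a b)ᵀ = vecMulVec b a := by
  ext i j; simp [vecMulVec_apply, mul_comm]

lemma trace_vmv_mul (a b : m → ℝ) (N : Matrix m m ℝ) :
    (vecMulVec a b * N).trace = b ⬝ᵥ (N *ᵥ a) := by
  simp only [trace, Matrix.diag, mul_apply, vecMulVec_apply, mulVec, dotProduct, Finset.mul_sum]
  rw [Finset.sum_comm]
  exact Finset.sum_congr rfl fun x _ => Finset.sum_congr rfl fun l _ => by ring

lemma vmv_sub_left (a c b : m → ℝ) :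
    vecMulVec (a - c) b = vecMulVec a b - vecMulVec c b := by
  ext i j; simp [vecMulVec_apply, sub_mul]

lemma vmv_sub_right (a b c : m → ℝ) :
    vecMulVec a (b - c) = vecMulVec a b - vecMulVec a c := by
  ext i j; simp [vecMulVec_apply, mul_sub]

lemma vmv_smul_right (a : m → ℝ) (c : ℝ) (b : m → ℝ) :
    vecMulVec a (c • b) = c • vecMulVec a b := by
  ext i j; simp [vecMulVec_apply]; ring

lemma vmv_smul_left (c : ℝ) (a b : m → ℝ) :
    vecMulVec (c • a) b = c • vecMulVec a b := by
  ext i j; simp [vecMulVec_apply]; ring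

lemma dot_mulVec_symm (A : Matrix m m ℝ) (u v : m → ℝ) :
    (A *ᵥ u) ⬝ᵥ v = u ⬝ᵥ (Aᵀ *ᵥ v) := by
  simp only [dotProduct, mulVec, transpose_apply, Finset.sum_mul, Finset.mul_sum]
  rw [Finset.sum_comm]
  exact Finset.sum_congr rfl fun x _ => Finset.sum_congr rfl fun l _ => by ring

lemma isHermitian_of_symm {A : Matrix m m ℝ} (h : Aᵀ = A) : A.IsHermitian := by
  have h2 : Aᴴ = Aᵀ := by ext i j; simp [conjTranspose_apply]
  rw [Matrix.IsHermitian, h2, h]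



variable {m : Type*} [Fintype m] [DecidableEq m]

lemma one_le_det_one_add {Q : Matrix m m ℝ} (hQ : Q.PosSemidef) :
    1 ≤ (1 + Q).det := by
  have hH := hQ.isHermitian
  have hUU : (hH.eigenvectorUnitary : Matrix m m ℝ) * star (hH.eigenvectorUnitary : Matrix m m ℝ) = 1 :=
    (Matrix.mem_unitaryGroup_iff).mp (hH.eigenvectorUnitary).2
  have key : 1 + Q = (hH.eigenvectorUnitary : Matrix m m ℝ) *
      (1 + diagonal (RCLike.ofReal ∘ hH.eigenvalues)) * star (hH.eigenvectorUnitary : Matrix m m ℝ) := by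
    rw [mul_add, add_mul, mul_one, hUU]
    nth_rewrite 1 [hH.spectral_theorem]
    rw [Unitary.conjStarAlgAut_apply]
  have h2 : ((hH.eigenvectorUnitary : Matrix m m ℝ)).det * (star (hH.eigenvectorUnitary : Matrix m m ℝ)).det = 1 := by
    rw [← det_mul, hUU, det_one]
  have hdet : (1 + Q).det = ((1 : Matrix m m ℝ) + diagonal (RCLike.ofReal ∘ hH.eigenvalues)).det := by
    rw [key, det_mul, det_mul]
    linear_combination ((1 : Matrix m m ℝ) + diagonal (RCLike.ofReal ∘ hH.eigenvalues)).det * h2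
  rw [hdet]
  have : (1 : Matrix m m ℝ) + diagonal (RCLike.ofReal ∘ hH.eigenvalues)
      = diagonal (fun i => 1 + hH.eigenvalues i) := by
    rw [← diagonal_one, diagonal_add]
    congr 1
  rw [this, det_diagonal]
  have hle : ∏ _i : m, (1:ℝ) ≤ ∏ i, (1 + hH.eigenvalues i) :=
    Finset.prod_le_prod (fun i _ => zero_le_one) (fun i _ => by linarith [hQ.eigenvalues_nonneg i])
  simpa using hle



variable {m : Type*} [Fintype m] [DecidableEq m]


lemma det_le_det_add_psd {B S : Matrix m m ℝ} (hB : B.PosDef) (hS : S.PosSemidef) :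
    B.det ≤ (B + S).det := by
  have hBpsd := hB.posSemidef
  set P := CFC.sqrt B with hPdef
  have hP2 : P * P = B := CFC.sqrt_mul_sqrt_self B hBpsd.nonneg
  have hPpsd : P.PosSemidef := (CFC.sqrt_nonneg B).posSemidef
  have hdetB : 0 < B.det := hB.det_pos
  have hdetP : P.det * P.det = B.det := by rw [← det_mul, hP2]
  have hPunit : IsUnit P.det := by
    refine isUnit_iff_ne_zero.mpr fun h => ?_
    rw [h, mul_zero] at hdetP; linarith
  have hPinv : P * P⁻¹ = 1 := mul_nonsing_inv _ hPunit
  have hPinv' : P⁻¹ * P = 1 := nonsing_inv_mul _ hPunit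
  have hPherm : P⁻¹.IsHermitian := by
    have := hPpsd.isHermitian
    rw [Matrix.IsHermitian] at this ⊢
    rw [conjTranspose_nonsing_inv, this]
  have hQpsd : (P⁻¹ * S * (P⁻¹)ᴴ).PosSemidef := hS.mul_mul_conjTranspose_same P⁻¹
  rw [Matrix.IsHermitian] at hPherm
  rw [hPherm] at hQpsd
  have key : B + S = P * (1 + P⁻¹ * S * P⁻¹) * P := by
    rw [mul_add, add_mul, mul_one, hP2]
    congr 1
    calc S = 1 * S * 1 := by rw [one_mul, mul_one]
    _ = (P * P⁻¹) * S * (P⁻¹ * P) := by rw [hPinv, hPinv']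
    _ = P * (P⁻¹ * S * P⁻¹) * P := by noncomm_ring
  rw [key, det_mul, det_mul]
  have h1 : 1 ≤ (1 + P⁻¹ * S * P⁻¹).det := one_le_det_one_add hQpsd
  nlinarith [hdetP, hdetB]

lemma trace_eq_sum_eig' {A : Matrix m m ℝ} (hA : A.IsHermitian) :
    A.trace = ∑ i, hA.eigenvalues i := by
  nth_rewrite 1 [hA.spectral_theorem]
  rw [Unitary.conjStarAlgAut_apply, Matrix.trace_mul_cycle, (Matrix.mem_unitaryGroup_iff').mp (hA.eigenvectorUnitary).2,
    one_mul, Matrix.trace_diagonal]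
  simp

lemma det_le_pow_trace_div {C : Matrix m m ℝ} (hC : C.PosSemidef) [Nonempty m] :
    C.det ≤ (C.trace / (Fintype.card m)) ^ (Fintype.card m) := by
  have hcpos : 0 < (Fintype.card m : ℝ) := by
    have := Fintype.card_pos (α := m); positivity
  have hnn : ∀ i, 0 ≤ hC.isHermitian.eigenvalues i := hC.eigenvalues_nonneg
  have hdet : C.det = ∏ i, hC.isHermitian.eigenvalues i := by
    simpa using hC.isHermitian.det_eq_prod_eigenvalues
  have htr : C.trace = ∑ i, hC.isHermitian.eigenvalues i := trace_eq_sum_eig' hC.isHermitian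
  have amgm := Real.geom_mean_le_arith_mean_weighted Finset.univ
    (fun _ => 1/(Fintype.card m : ℝ)) hC.isHermitian.eigenvalues
    (fun i _ => by positivity)
    (by rw [Finset.sum_const, Finset.card_univ, nsmul_eq_mul]; field_simp)
    (fun i _ => hnn i)
  have hL : (∏ i, hC.isHermitian.eigenvalues i ^ (1/(Fintype.card m : ℝ))) ^ (Fintype.card m)
      = ∏ i, hC.isHermitian.eigenvalues i := by
    rw [← Finset.prod_pow]
    refine Finset.prod_congr rfl fun i _ => ?_
    rw [← Real.rpow_natCast (hC.isHermitian.eigenvalues i ^ (1/(Fintype.card m : ℝ))) (Fintype.card m),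
      ← Real.rpow_mul (hnn i)]
    rw [one_div, inv_mul_cancel₀ (ne_of_gt hcpos), Real.rpow_one]
  have hR : ∑ i, (1/(Fintype.card m : ℝ)) * hC.isHermitian.eigenvalues i
      = C.trace / (Fintype.card m : ℝ) := by
    rw [htr, Finset.sum_div]
    exact Finset.sum_congr rfl fun i _ => by ring
  rw [hdet, ← hL, ← hR]
  refine pow_le_pow_left₀ (Finset.prod_nonneg fun i _ => Real.rpow_nonneg (hnn i) _) ?_ _
  exact amgm



variable {m : Type*} [Fintype m] [DecidableEq m]


lemma blockdet {n k : ℕ} (z : Fin n → Fin k → ℝ) (v : Fin n → ℝ) (hv1 : ∑ i, v i = 1)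
    (c : Fin k → ℝ) (hc : ∑ i, v i • (z i - c) = 0) :
    (∑ i, v i • vecMulVec (Fin.cons 1 (z i) : Fin (k+1) → ℝ) (Fin.cons 1 (z i))).det
      = (∑ i, v i • vecMulVec (z i - c) (z i - c)).det := by
  classical
  set E : Matrix (Fin (k+1)) (Fin (k+1)) ℝ :=
    1 - vecMulVec (Fin.cons 0 c) (Pi.single 0 1) with hE
  have hdetE : E.det = 1 := by
    have htri : E.BlockTriangular OrderDual.toDual := by
      intro i j hij
      have hij' : i < j := hij
      have hj0 : j ≠ 0 := (Fin.pos_iff_ne_zero.mp (lt_of_le_of_lt (Fin.zero_le i) hij'))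
      have hije : i ≠ j := ne_of_lt hij'
      simp [hE, vecMulVec_apply, one_apply, hije, Pi.single_eq_of_ne hj0]
    rw [Matrix.det_of_lowerTriangular E htri]
    refine Finset.prod_eq_one fun i _ => ?_
    refine Fin.cases ?_ (fun j => ?_) i
    · simp [hE, vecMulVec_apply]
    · simp [hE, vecMulVec_apply, Pi.single_eq_of_ne (Fin.succ_ne_zero j)]
  have hEx : ∀ u : Fin (k+1) → ℝ, E *ᵥ u = u - (u 0) • (Fin.cons 0 c : Fin (k+1) → ℝ) := by
    intro u
    rw [hE, sub_mulVec, one_mulVec, vmv_mulVec]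
    congr 2
    simp [dotProduct, Pi.single_apply]
  have hcons : ∀ i, E *ᵥ (Fin.cons 1 (z i) : Fin (k+1) → ℝ) = Fin.cons 1 (z i - c) := by
    intro i
    rw [hEx]
    funext j
    refine Fin.cases ?_ (fun j' => ?_) j <;>
      simp [Fin.cons_zero, Fin.cons_succ]
  have key : E * (∑ i, v i • vecMulVec (Fin.cons 1 (z i) : Fin (k+1) → ℝ) (Fin.cons 1 (z i))) * Eᵀ
      = ∑ i, v i • vecMulVec (Fin.cons 1 (z i - c) : Fin (k+1) → ℝ) (Fin.cons 1 (z i - c)) := by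
    rw [Finset.mul_sum, Finset.sum_mul]
    refine Finset.sum_congr rfl fun i _ => ?_
    rw [mul_smul_comm, smul_mul_assoc, mul_vmv, vmv_mul, transpose_transpose, hcons]
  have hdet2 : (∑ i, v i • vecMulVec (Fin.cons 1 (z i) : Fin (k+1) → ℝ) (Fin.cons 1 (z i))).det
      = (∑ i, v i • vecMulVec (Fin.cons 1 (z i - c) : Fin (k+1) → ℝ) (Fin.cons 1 (z i - c))).det := by
    rw [← key, det_mul, det_mul, det_transpose, hdetE]
    ring
  rw [hdet2]
  set N : Matrix (Fin (k+1)) (Fin (k+1)) ℝ :=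
    ∑ i, v i • vecMulVec (Fin.cons 1 (z i - c) : Fin (k+1) → ℝ) (Fin.cons 1 (z i - c)) with hN
  have hN0 : ∀ j, N j 0 = ∑ i, v i * (Fin.cons 1 (z i - c) : Fin (k+1) → ℝ) j := by
    intro j
    simp [hN, Matrix.sum_apply, vecMulVec_apply, Fin.cons_zero]
  have hNzero : ∀ j : Fin k, N j.succ 0 = 0 := by
    intro j
    rw [hN0]
    have := congrFun hc j
    simpa [Finset.sum_apply, Fin.cons_succ] using this
  have hN00 : N 0 0 = 1 := by
    rw [hN0]
    simpa [Fin.cons_zero] using hv1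
  rw [Matrix.det_succ_column_zero]
  rw [Finset.sum_eq_single 0]
  · rw [hN00, Fin.succAbove_zero]
    simp only [Fin.val_zero, pow_zero, one_mul, mul_one]
    congr 1
    ext a b
    simp [hN, Matrix.submatrix_apply, Matrix.sum_apply, vecMulVec_apply, Fin.cons_succ]
  · intro j _ hj
    obtain ⟨j', rfl⟩ := Fin.exists_succ_eq.mpr hj
    rw [hNzero j']
    ring
  · intro h
    exact absurd (Finset.mem_univ _) h



variable {m : Type*} [Fintype m] [DecidableEq m]


lemma vmv_zero_right (a : m → ℝ) : vecMulVec a (0 : m → ℝ) = 0 := by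
  ext i j; simp [vecMulVec_apply]

lemma vmv_zero_left (b : m → ℝ) : vecMulVec (0 : m → ℝ) b = 0 := by
  ext i j; simp [vecMulVec_apply]

lemma sum_vmv_right {ι : Type*} [Fintype ι] (c : ι → ℝ) (a : m → ℝ) (u : ι → m → ℝ) :
    ∑ i, c i • vecMulVec a (u i) = vecMulVec a (∑ i, c i • u i) := by
  ext s t
  simp only [Matrix.sum_apply, Matrix.smul_apply, vecMulVec_apply, Finset.sum_apply,
    Pi.smul_apply, smul_eq_mul, Finset.mul_sum]
  exact Finset.sum_congr rfl fun i _ => by ring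

lemma dotProduct_sum' {ι : Type*} (s : Finset ι) (x : m → ℝ) (v : ι → m → ℝ) :
    x ⬝ᵥ (∑ i ∈ s, v i) = ∑ i ∈ s, x ⬝ᵥ v i := by
  simp only [dotProduct, Finset.sum_apply, Finset.mul_sum]
  exact Finset.sum_comm

lemma quadform_sum {ι : Type*} [Fintype ι] (c : ι → ℝ) (u : ι → m → ℝ) (x : m → ℝ) :
    x ⬝ᵥ ((∑ i, c i • vecMulVec (u i) (u i)) *ᵥ x) = ∑ i, c i * (u i ⬝ᵥ x)^2 := by
  rw [sum_mulVec', dotProduct_sum']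
  refine Finset.sum_congr rfl fun i _ => ?_
  rw [smul_mulVec, vmv_mulVec, dotProduct_smul, dotProduct_smul]
  rw [smul_eq_mul, smul_eq_mul, dotProduct_comm x (u i)]
  ring

lemma psd_sum {ι : Type*} [Fintype ι] (c : ι → ℝ) (hc : ∀ i, 0 ≤ c i) (u : ι → m → ℝ) :
    (∑ i, c i • vecMulVec (u i) (u i)).PosSemidef := by
  refine Matrix.PosSemidef.of_dotProduct_mulVec_nonneg ?_ ?_
  · apply isHermitian_of_symm
    rw [Matrix.transpose_sum]
    refine Finset.sum_congr rfl fun i _ => ?_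
    rw [Matrix.transpose_smul, transpose_vmv]
  · intro x
    have hsx : star x = x := by
      funext j; simp
    rw [hsx, quadform_sum]
    exact Finset.sum_nonneg fun i _ => mul_nonneg (hc i) (sq_nonneg _)

lemma core {n k : ℕ} (hk : 1 ≤ k) (w : Fin n → ℝ) (hw : ∀ i, 0 < w i) (hw1 : ∑ i, w i = 1)
    (y : Fin n → Fin k → ℝ) (hy0 : ∑ i, w i • y i = 0)
    (Mc : Matrix (Fin k) (Fin k) ℝ) (hMc : Mc = ∑ i, w i • vecMulVec (y i) (y i))
    (hpos : Mc.PosDef)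
    (w' : Fin n → ℝ) (hw'def : ∀ i, w' i = w i * (y i ⬝ᵥ Mc⁻¹ *ᵥ y i) / k)
    (b : Fin k → ℝ) :
    Mc.det ≤ (∑ i, w' i • vecMulVec (y i - b) (y i - b)).det := by
  have hk0 : (0:ℝ) < k := by exact_mod_cast hk
  have hInv : Mc⁻¹.PosDef := hpos.inv
  have hMcUnit : IsUnit Mc.det := isUnit_iff_ne_zero.mpr (ne_of_gt hpos.det_pos)
  have hMM : Mc * Mc⁻¹ = 1 := mul_nonsing_inv _ hMcUnit
  have hMM' : Mc⁻¹ * Mc = 1 := nonsing_inv_mul _ hMcUnit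
  have hMcT : Mcᵀ = Mc := by
    have h := hpos.isHermitian
    rw [Matrix.IsHermitian] at h
    nth_rewrite 2 [← h]
    ext i j; simp [conjTranspose_apply]
  have hMiT : (Mc⁻¹)ᵀ = Mc⁻¹ := by rw [transpose_nonsing_inv, hMcT]
  set d : Fin n → ℝ := fun i => y i ⬝ᵥ Mc⁻¹ *ᵥ y i with hd
  have hstar : ∀ x : Fin k → ℝ, star x = x := fun x => by funext j; simp
  have hd0 : ∀ i, 0 ≤ d i := fun i => by
    have := hInv.posSemidef.dotProduct_mulVec_nonneg (y i); rwa [hstar] at this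
  have hdy : ∀ i, d i = 0 → y i = 0 := by
    intro i h
    by_contra hy
    have := hInv.dotProduct_mulVec_pos hy
    rw [hstar] at this
    rw [hd] at h
    simp only at h
    linarith
  have hw'0 : ∀ i, 0 ≤ w' i := fun i =>
    (hw'def i) ▸ div_nonneg (mul_nonneg (hw i).le (hd0 i)) hk0.le
  set g : Fin n → Fin k → ℝ := fun i => (↑k / d i) • (Mc⁻¹ *ᵥ y i) with hg
  have hgy : ∀ i, y i = 0 → g i = 0 := by
    intro i h; rw [hg]; simp [h]
  set G : Matrix (Fin k) (Fin k) ℝ := ∑ i, w' i • vecMulVec (g i) (g i) with hG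
  have hGpsd : G.PosSemidef := psd_sum _ hw'0 _
  have hGpos : G.PosDef := by
    refine Matrix.PosDef.of_dotProduct_mulVec_pos hGpsd.isHermitian fun x hx => ?_
    rw [hstar]
    have hqf : x ⬝ᵥ G *ᵥ x = ∑ i, w' i * (g i ⬝ᵥ x)^2 := quadform_sum _ _ _
    refine lt_of_le_of_ne (by rw [hqf]; exact Finset.sum_nonneg fun i _ => mul_nonneg (hw'0 i) (sq_nonneg _)) fun heq => hx ?_
    have hzero : ∀ i ∈ Finset.univ, w' i * (g i ⬝ᵥ x)^2 = 0 := by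
      rw [hqf] at heq
      exact (Finset.sum_eq_zero_iff_of_nonneg
        (fun i _ => mul_nonneg (hw'0 i) (sq_nonneg _))).mp heq.symm
    have hall : ∀ i, y i ⬝ᵥ (Mc⁻¹ *ᵥ x) = 0 := by
      intro i
      by_cases hyi : y i = 0
      · simp [hyi]
      · have hdi : 0 < d i := lt_of_le_of_ne (hd0 i) fun h => hyi (hdy i h.symm)
        have hw'i : 0 < w' i := by
          rw [hw'def i]
          exact div_pos (mul_pos (hw i) hdi) hk0
        have hterm := hzero i (Finset.mem_univ i)
        have hgx : g i ⬝ᵥ x = 0 := by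
          rcases mul_eq_zero.mp hterm with h | h
          · exact absurd h (ne_of_gt hw'i)
          · exact pow_eq_zero_iff (by norm_num) |>.mp h
        rw [hg] at hgx
        simp only [smul_dotProduct, smul_eq_mul] at hgx
        rcases mul_eq_zero.mp hgx with h | h
        · exact absurd h (div_ne_zero (ne_of_gt hk0) (ne_of_gt hdi))
        · rw [dot_mulVec_symm, hMiT] at h
          exact h
    have h1 : Mc *ᵥ (Mc⁻¹ *ᵥ x) = 0 := by
      nth_rewrite 1 [hMc]
      rw [sum_mulVec']
      refine Finset.sum_eq_zero fun i _ => ?_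
      rw [smul_mulVec, vmv_mulVec, hall i]
      simp
    rw [mulVec_mulVec, hMM, one_mulVec] at h1
    exact h1
  have hGdetpos : 0 < G.det := hGpos.det_pos
  have hGUnit : IsUnit G.det := isUnit_iff_ne_zero.mpr (ne_of_gt hGdetpos)
  have hGG : G * G⁻¹ = 1 := mul_nonsing_inv _ hGUnit
  have hGG' : G⁻¹ * G = 1 := nonsing_inv_mul _ hGUnit
  have hGT : Gᵀ = G := by
    have h := hGpsd.isHermitian
    rw [Matrix.IsHermitian] at h
    nth_rewrite 2 [← h]
    ext i j; simp [conjTranspose_apply]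
  have hGiT : (G⁻¹)ᵀ = G⁻¹ := by rw [transpose_nonsing_inv, hGT]
  -- the correlation identity
  have hC : (∑ i, w' i • vecMulVec (y i - b) (g i)) = 1 := by
    have hterm : ∀ i, w' i • vecMulVec (y i - b) (g i)
        = w i • vecMulVec (y i - b) (Mc⁻¹ *ᵥ y i) := by
      intro i
      by_cases hyi : y i = 0
      · have hdi : d i = 0 := by rw [hd]; simp [hyi]
        have hw'i : w' i = 0 := by
          rw [hw'def i]
          have : y i ⬝ᵥ Mc⁻¹ *ᵥ y i = 0 := hdi
          rw [this]; ring
        rw [hw'i, hyi]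
        simp [mulVec_zero, vmv_zero_right]
      · have hdi : d i ≠ 0 := fun h => hyi (hdy i h)
        rw [hg]
        simp only
        rw [vmv_smul_right, smul_smul, hw'def i]
        congr 1
        have hdieq : y i ⬝ᵥ Mc⁻¹ *ᵥ y i = d i := rfl
        rw [hdieq]
        field_simp
    rw [Finset.sum_congr rfl fun i _ => hterm i]
    have h2 : ∀ i, w i • vecMulVec (y i - b) (Mc⁻¹ *ᵥ y i)
        = (w i • vecMulVec (y i - b) (y i)) * Mc⁻¹ := by
      intro i
      rw [smul_mul_assoc, vmv_mul, hMiT]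
    rw [Finset.sum_congr rfl fun i _ => h2 i, ← Finset.sum_mul]
    have h3 : ∑ i, w i • vecMulVec (y i - b) (y i) = Mc := by
      have h4 : ∀ i, w i • vecMulVec (y i - b) (y i)
          = w i • vecMulVec (y i) (y i) - w i • vecMulVec b (y i) := by
        intro i; rw [vmv_sub_left, smul_sub]
      rw [Finset.sum_congr rfl fun i _ => h4 i, Finset.sum_sub_distrib]
      have h5 : ∑ i, w i • vecMulVec b (y i) = 0 := by
        rw [sum_vmv_right, hy0, vmv_zero_right]
      rw [h5, hMc, sub_zero]
    rw [h3, hMM]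
  have hCt : (∑ i, w' i • vecMulVec (g i) (y i - b)) = 1 := by
    have := congrArg Matrix.transpose hC
    rw [Matrix.transpose_sum, Matrix.transpose_one] at this
    rw [← this]
    refine Finset.sum_congr rfl fun i _ => ?_
    rw [Matrix.transpose_smul, transpose_vmv]
  -- expansion of the square
  set Cov : Matrix (Fin k) (Fin k) ℝ := ∑ i, w' i • vecMulVec (y i - b) (y i - b) with hCov
  have hTpsd : (∑ i, w' i • vecMulVec (y i - b - G⁻¹ *ᵥ g i) (y i - b - G⁻¹ *ᵥ g i)).PosSemidef :=
    psd_sum _ hw'0 _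
  have hexp : ∑ i, w' i • vecMulVec (y i - b - G⁻¹ *ᵥ g i) (y i - b - G⁻¹ *ᵥ g i)
      = Cov - G⁻¹ := by
    have hterm : ∀ i, w' i • vecMulVec (y i - b - G⁻¹ *ᵥ g i) (y i - b - G⁻¹ *ᵥ g i)
        = w' i • vecMulVec (y i - b) (y i - b)
          - (w' i • vecMulVec (y i - b) (g i)) * G⁻¹
          - G⁻¹ * (w' i • vecMulVec (g i) (y i - b))
          + G⁻¹ * (w' i • vecMulVec (g i) (g i)) * G⁻¹ := by
      intro i
      have e1' : ∀ u : Fin k → ℝ, vecMulVec u (G⁻¹ *ᵥ g i) = vecMulVec u (g i) * G⁻¹ := by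
        intro u; rw [vmv_mul, hGiT]
      have e2' : ∀ u : Fin k → ℝ, vecMulVec (G⁻¹ *ᵥ g i) u = G⁻¹ * vecMulVec (g i) u :=
        fun u => (mul_vmv _ _ _).symm
      have hmat : vecMulVec (y i - b - G⁻¹ *ᵥ g i) (y i - b - G⁻¹ *ᵥ g i)
          = vecMulVec (y i - b) (y i - b) - vecMulVec (y i - b) (g i) * G⁻¹
            - G⁻¹ * vecMulVec (g i) (y i - b) + G⁻¹ * vecMulVec (g i) (g i) * G⁻¹ := by
        simp only [vmv_sub_left, vmv_sub_right, e1', e2']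
        noncomm_ring
      rw [hmat, smul_add, smul_sub, smul_sub, smul_mul_assoc, mul_smul_comm, mul_smul_comm,
        smul_mul_assoc]
    rw [Finset.sum_congr rfl fun i _ => hterm i]
    rw [Finset.sum_add_distrib, Finset.sum_sub_distrib, Finset.sum_sub_distrib,
      ← Finset.sum_mul, ← Finset.mul_sum]
    have h4 : ∑ i, G⁻¹ * (w' i • vecMulVec (g i) (g i)) * G⁻¹
        = G⁻¹ * G * G⁻¹ := by
      rw [← Finset.sum_mul, ← Finset.mul_sum, ← hG]
    rw [h4, hC, hCt, hGG', one_mul, mul_one, ← hCov]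
    abel
  -- trace bound
  have htrace : (G * Mc).trace = ∑ i, w' i * (g i ⬝ᵥ (Mc *ᵥ g i)) := by
    rw [hG, Finset.sum_mul, Matrix.trace_sum]
    refine Finset.sum_congr rfl fun i _ => ?_
    rw [smul_mul_assoc, Matrix.trace_smul, trace_vmv_mul]
    simp [dotProduct_comm]
  have htle : (G * Mc).trace ≤ k := by
    rw [htrace]
    have hterm2 : ∀ i, w' i * (g i ⬝ᵥ (Mc *ᵥ g i)) ≤ k * w i := by
      intro i
      by_cases hyi : y i = 0
      · rw [hgy i hyi]
        simpa using le_of_lt (mul_pos hk0 (hw i))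
      · have hdi : 0 < d i := lt_of_le_of_ne (hd0 i) fun h => hyi (hdy i h.symm)
        have hMg : Mc *ᵥ g i = (↑k / d i) • y i := by
          rw [hg]
          simp only
          rw [mulVec_smul, mulVec_mulVec, hMM, one_mulVec]
        have hgMg : g i ⬝ᵥ (Mc *ᵥ g i) = (↑k / d i) * ((↑k / d i) * d i) := by
          rw [hMg, hg]
          simp only [smul_dotProduct, dotProduct_smul, smul_eq_mul]
          congr 2
          rw [dot_mulVec_symm, hMiT]
        rw [hgMg, hw'def i]
        have hdieq : y i ⬝ᵥ Mc⁻¹ *ᵥ y i = d i := rfl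
        rw [hdieq]
        refine le_of_eq ?_
        field_simp
    calc ∑ i, w' i * (g i ⬝ᵥ (Mc *ᵥ g i)) ≤ ∑ i, (k : ℝ) * w i :=
          Finset.sum_le_sum fun i _ => hterm2 i
    _ = k := by rw [← Finset.mul_sum, hw1, mul_one]
  have htnn : 0 ≤ (G * Mc).trace := by
    rw [htrace]
    refine Finset.sum_nonneg fun i _ => mul_nonneg (hw'0 i) ?_
    have := hpos.posSemidef.dotProduct_mulVec_nonneg (g i)
    rwa [hstar] at this
  -- determinant bound : det G * det Mc ≤ 1
  have hne : Nonempty (Fin k) := ⟨⟨0, hk⟩⟩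
  have hdGM : G.det * Mc.det ≤ 1 := by
    have hP2 : CFC.sqrt G * CFC.sqrt G = G := CFC.sqrt_mul_sqrt_self G hGpsd.nonneg
    have hPherm : (CFC.sqrt G)ᴴ = CFC.sqrt G := (CFC.sqrt_nonneg G).posSemidef.isHermitian
    have hCpsd : (CFC.sqrt G * Mc * CFC.sqrt G).PosSemidef := by
      have := hpos.posSemidef.mul_mul_conjTranspose_same (CFC.sqrt G)
      rwa [hPherm] at this
    have hdet2 : (CFC.sqrt G * Mc * CFC.sqrt G).det = G.det * Mc.det := by
      have hPP : (CFC.sqrt G).det * (CFC.sqrt G).det = G.det := by rw [← det_mul, hP2]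
      rw [det_mul, det_mul]
      linear_combination Mc.det * hPP
    have htr2 : (CFC.sqrt G * Mc * CFC.sqrt G).trace = (G * Mc).trace := by
      rw [Matrix.trace_mul_cycle, hP2]
    have := det_le_pow_trace_div hCpsd
    rw [hdet2, htr2, Fintype.card_fin] at this
    refine le_trans this ?_
    have h5 : (G * Mc).trace / (k:ℝ) ≤ 1 := by
      rw [div_le_one hk0]; exact htle
    have h6 : 0 ≤ (G * Mc).trace / (k:ℝ) := div_nonneg htnn hk0.le
    calc ((G * Mc).trace / (k:ℝ)) ^ k ≤ 1 ^ k := pow_le_pow_left₀ h6 h5 k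
    _ = 1 := one_pow k
  -- final chain
  have hMcdet : 0 < Mc.det := hpos.det_pos
  have hdetGinv : (G⁻¹).det = (G.det)⁻¹ := by
    rw [det_nonsing_inv, Ring.inverse_eq_inv']
  have hstep1 : Mc.det ≤ (G⁻¹).det := by
    rw [hdetGinv, ← one_div, le_div_iff₀ hGdetpos]
    calc Mc.det * G.det = G.det * Mc.det := mul_comm _ _
    _ ≤ 1 := hdGM
  have hstep2 : (G⁻¹).det ≤ Cov.det := by
    have hCoveq : Cov = G⁻¹ + (Cov - G⁻¹) := by abel
    rw [hCoveq]
    exact det_le_det_add_psd hGpos.inv (hexp ▸ hTpsd)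
  exact le_trans hstep1 hstep2


end TittAux

open TittAux

/-- Titterington's conjecture: monotonicity of the iteration (alg2) for
D-optimality of the non-intercept coefficients in a linear model.
Here the dimension is `m = k + 1 ≥ 2`, the design points are
`x i = (1, z iᵀ)ᵀ` and `A i = x i (x i)ᵀ`. -/
theorem stmt_6 {n k : ℕ} (hn : 0 < n) (hk : 1 ≤ k)
    (z : Fin n → Fin k → ℝ)
    (x : Fin n → Fin (k + 1) → ℝ) (hx : ∀ i, x i = Fin.cons 1 (z i))
    (A : Fin n → Matrix (Fin (k + 1)) (Fin (k + 1)) ℝ)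
    (hA : ∀ i, A i = vecMulVec (x i) (x i))
    (M : (Fin n → ℝ) → Matrix (Fin (k + 1)) (Fin (k + 1)) ℝ)
    (hM : ∀ v : Fin n → ℝ, M v = ∑ i, v i • A i)
    (w : Fin n → ℝ) (hw : ∀ i, 0 < w i) (hw1 : ∑ i, w i = 1)
    (zbar : Fin k → ℝ) (hzbar : zbar = ∑ i, w i • z i)
    (Mc : Matrix (Fin k) (Fin k) ℝ)
    (hMc : Mc = ∑ i, w i • vecMulVec (z i - zbar) (z i - zbar))
    (hMwpos : (M w).PosDef)
    (w' : Fin n → ℝ)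
    (hw' : ∀ i, w' i = w i * ((z i - zbar) ⬝ᵥ Mc⁻¹ *ᵥ (z i - zbar)) / k) :
    (∀ i, 0 ≤ w' i) ∧ (∑ i, w' i = 1) ∧ (M w).det ≤ (M w').det := by
  have hk0 : (0:ℝ) < k := by exact_mod_cast hk
  have hy0 : ∑ i, w i • (z i - zbar) = 0 := by
    have h1 : ∀ i, w i • (z i - zbar) = w i • z i - w i • zbar := fun i => smul_sub _ _ _
    rw [Finset.sum_congr rfl fun i _ => h1 i, Finset.sum_sub_distrib, ← Finset.sum_smul, hw1,
      one_smul, ← hzbar, sub_self]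
  -- Mc is positive definite
  have hMcpsd : Mc.PosSemidef := hMc ▸ psd_sum w (fun i => (hw i).le) _
  have hMwq : M w = ∑ i, w i • vecMulVec (Fin.cons 1 (z i) : Fin (k+1) → ℝ) (Fin.cons 1 (z i)) := by
    rw [hM]
    exact Finset.sum_congr rfl fun i _ => by rw [hA, hx]
  have hMcpd : Mc.PosDef := by
    refine Matrix.PosDef.of_dotProduct_mulVec_pos hMcpsd.isHermitian fun u hu => ?_
    have hstar : star u = u := by funext j; simp
    rw [hstar]
    set v : Fin (k+1) → ℝ := Fin.cons (-(zbar ⬝ᵥ u)) u with hv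
    have hvne : v ≠ 0 := by
      intro h
      apply hu
      funext j
      have := congrFun h j.succ
      simpa [hv, Fin.cons_succ] using this
    have hpos := hMwpos.dotProduct_mulVec_pos hvne
    have hstar2 : star v = v := by funext j; simp
    rw [hstar2] at hpos
    rw [hMwq] at hpos
    rw [quadform_sum] at hpos
    have hdot : ∀ i, (Fin.cons 1 (z i) : Fin (k+1) → ℝ) ⬝ᵥ v = (z i - zbar) ⬝ᵥ u := by
      intro i
      rw [hv]
      have : (Fin.cons 1 (z i) : Fin (k+1) → ℝ) ⬝ᵥ (Fin.cons (-(zbar ⬝ᵥ u)) u : Fin (k+1) → ℝ)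
          = 1 * (-(zbar ⬝ᵥ u)) + z i ⬝ᵥ u := Matrix.cons_dotProduct_cons _ _ _ _
      rw [this, sub_dotProduct]
      ring
    rw [Finset.sum_congr rfl fun i _ => by rw [hdot i]] at hpos
    have hq : u ⬝ᵥ Mc *ᵥ u = ∑ i, w i * ((z i - zbar) ⬝ᵥ u)^2 := by
      rw [hMc, quadform_sum]
    rw [hq]
    exact hpos
  have hInvpsd : Mc⁻¹.PosSemidef := hMcpd.inv.posSemidef
  have hstar3 : ∀ q : Fin k → ℝ, star q = q := fun q => by funext j; simp
  have hd0 : ∀ i, 0 ≤ (z i - zbar) ⬝ᵥ Mc⁻¹ *ᵥ (z i - zbar) := by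
    intro i
    have := hInvpsd.dotProduct_mulVec_nonneg (z i - zbar)
    rwa [hstar3] at this
  -- part 1
  have part1 : ∀ i, 0 ≤ w' i := fun i =>
    (hw' i) ▸ div_nonneg (mul_nonneg (hw i).le (hd0 i)) hk0.le
  -- part 2
  have hMcUnit : IsUnit Mc.det := isUnit_iff_ne_zero.mpr (ne_of_gt hMcpd.det_pos)
  have hMM : Mc * Mc⁻¹ = 1 := mul_nonsing_inv _ hMcUnit
  have hsumd : ∑ i, w i * ((z i - zbar) ⬝ᵥ Mc⁻¹ *ᵥ (z i - zbar)) = k := by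
    have h2 : (Mc * Mc⁻¹).trace = ∑ i, w i * ((z i - zbar) ⬝ᵥ Mc⁻¹ *ᵥ (z i - zbar)) := by
      nth_rewrite 1 [hMc]
      rw [Finset.sum_mul, Matrix.trace_sum]
      refine Finset.sum_congr rfl fun i _ => ?_
      rw [smul_mul_assoc, Matrix.trace_smul, trace_vmv_mul]
      simp [dotProduct_comm]
    rw [← h2, hMM, Matrix.trace_one, Fintype.card_fin]
  have part2 : ∑ i, w' i = 1 := by
    rw [Finset.sum_congr rfl fun i _ => hw' i, ← Finset.sum_div, hsumd, div_self (ne_of_gt hk0)]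
  refine ⟨part1, part2, ?_⟩
  -- part 3
  set b : Fin k → ℝ := ∑ i, w' i • (z i - zbar) with hb
  have hdet1 : (M w).det = Mc.det := by
    rw [hMwq, blockdet z w hw1 zbar hy0, ← hMc]
  have hcore : Mc.det ≤ (∑ i, w' i • vecMulVec (z i - zbar - b) (z i - zbar - b)).det := by
    exact core hk w hw hw1 (fun i => z i - zbar) hy0 Mc hMc hMcpd w' hw' b
  have hc' : ∑ i, w' i • (z i - (zbar + b)) = 0 := by
    have h1 : ∀ i, z i - (zbar + b) = (z i - zbar) - b := fun i => by
      rw [sub_add_eq_sub_sub]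
    rw [Finset.sum_congr rfl fun i _ => by rw [h1 i]]
    have h2 : ∀ i, w' i • (z i - zbar - b) = w' i • (z i - zbar) - w' i • b := fun i =>
      smul_sub _ _ _
    rw [Finset.sum_congr rfl fun i _ => h2 i, Finset.sum_sub_distrib, ← hb, ← Finset.sum_smul,
      part2, one_smul, sub_self]
  have hdet2 : (M w').det = (∑ i, w' i • vecMulVec (z i - zbar - b) (z i - zbar - b)).det := by
    have hMwq' : M w' = ∑ i, w' i • vecMulVec (Fin.cons 1 (z i) : Fin (k+1) → ℝ) (Fin.cons 1 (z i)) := by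
      rw [hM]
      exact Finset.sum_congr rfl fun i _ => by rw [hA, hx]
    rw [hMwq', blockdet z w' part2 (zbar + b) hc']
    congr 1
    refine Finset.sum_congr rfl fun i _ => ?_
    rw [sub_add_eq_sub_sub]
  rw [hdet1, hdet2]
  exact hcore
end

section
/- Let w_1, …, w_n be positive reals with Σ_{i=1}^n w_i = 1, let r_1, …, r_n be nonnegative reals, and let λ ∈ (0,1]. Then (Σ_{i=1}^n r_i / w_i)^{1-λ} ≥ Σ_{i=1}^n w_i (r_i / w_i^2)^{1-λ} and (Σ_{i=1}^n r_i / w_i)^{λ} ≥ Σ_{i=1}^n w_i (r_i / w_i^2)^{λ}; consequently Σ_{i=1}^n r_i / w_i ≥ (Σ_{i=1}^n r_i^{1-λ} w_i^{2λ-1}) · (Σ_{i=1}^n r_i^{λ} w_i^{1-2λ}). (Jensen-inequality step in the proof of the general monotonicity theorem.) -/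
lemma jensen_step {n : ℕ} (w r : Fin n → ℝ)
    (hw : ∀ i, 0 < w i) (hw1 : ∑ i, w i = 1)
    (hr : ∀ i, 0 ≤ r i) {p : ℝ} (hp0 : 0 ≤ p) (hp1 : p ≤ 1) :
    ∑ i, w i * (r i / w i ^ 2) ^ p ≤ (∑ i, r i / w i) ^ p := by
  have h := (Real.concaveOn_rpow hp0 hp1).le_map_sum
    (t := Finset.univ) (w := w) (p := fun i => r i / w i ^ 2)
    (fun i _ => (hw i).le) hw1 (fun i _ => Set.mem_Ici.mpr (div_nonneg (hr i) (by positivity)))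
  simpa only [smul_eq_mul, div_pow, ← mul_div_assoc, pow_two,
    mul_div_mul_left _ _ (hw _).ne'] using h

/-- Jensen-inequality step in the proof of the general monotonicity theorem. -/
theorem stmt_7 {n : ℕ} (w r : Fin n → ℝ)
    (hw : ∀ i, 0 < w i) (hw1 : ∑ i, w i = 1)
    (hr : ∀ i, 0 ≤ r i)
    (lam : ℝ) (hlam0 : 0 < lam) (hlam1 : lam ≤ 1) :
    (∑ i, w i * (r i / w i ^ 2) ^ (1 - lam) ≤ (∑ i, r i / w i) ^ (1 - lam)) ∧
    (∑ i, w i * (r i / w i ^ 2) ^ lam ≤ (∑ i, r i / w i) ^ lam) ∧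
    ((∑ i, r i ^ (1 - lam) * w i ^ (2 * lam - 1)) *
        (∑ i, r i ^ lam * w i ^ (1 - 2 * lam)) ≤ ∑ i, r i / w i) := by
  have h1 := jensen_step w r hw hw1 hr (p := 1 - lam) (by linarith) (by linarith)
  have h2 := jensen_step w r hw hw1 hr (p := lam) hlam0.le hlam1
  refine ⟨h1, h2, ?_⟩
  have hS : 0 ≤ ∑ i, r i / w i :=
    Finset.sum_nonneg fun i _ => div_nonneg (hr i) (hw i).le
  have key : ∀ (p : ℝ), ∀ i, r i ^ p * w i ^ (1 - 2 * p) = w i * (r i / w i ^ 2) ^ p := by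
    intro p i
    rw [Real.div_rpow (hr i) (by positivity), ← Real.rpow_natCast (w i) 2,
      ← Real.rpow_mul (hw i).le]
    rw [Real.rpow_sub (hw i), Real.rpow_one]
    field_simp
    ring_nf
  have e1 : ∀ i, r i ^ (1 - lam) * w i ^ (2 * lam - 1)
      = w i * (r i / w i ^ 2) ^ (1 - lam) := by
    intro i
    have := key (1 - lam) i
    rw [show (1 - 2 * (1 - lam)) = 2 * lam - 1 by ring] at this
    exact this
  have e2 : ∀ i, r i ^ lam * w i ^ (1 - 2 * lam) = w i * (r i / w i ^ 2) ^ lam :=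
    key lam
  simp only [e1, e2]
  have hB : 0 ≤ ∑ i, w i * (r i / w i ^ 2) ^ lam :=
    Finset.sum_nonneg fun i _ => mul_nonneg (hw i).le (Real.rpow_nonneg (div_nonneg (hr i) (by positivity)) _)
  calc (∑ i, w i * (r i / w i ^ 2) ^ (1 - lam)) * (∑ i, w i * (r i / w i ^ 2) ^ lam)
      ≤ (∑ i, r i / w i) ^ (1 - lam) * (∑ i, r i / w i) ^ lam :=
        mul_le_mul h1 h2 hB (Real.rpow_nonneg hS _)
    _ = ∑ i, r i / w i := by
        rw [← Real.rpow_add' hS (by norm_num)]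
        norm_num
end

section
/- Let w_1, …, w_n be positive reals with Σ_{i=1}^n w_i = 1, let r_1, …, r_n be nonnegative reals not all zero, let λ ∈ (0,1], and define w'_i = r_i^λ w_i^{1-2λ} / Σ_{j=1}^n r_j^λ w_j^{1-2λ}. Then Σ_{i : w'_i > 0} r_i / w'_i ≤ Σ_{i=1}^n r_i / w_i. (The multiplicative update with power λ does not increase the objective Σ_i r_i / w_i.) -/
open Finset

lemma holder_aux {ι : Type*} (s : Finset ι) (f g : ι → ℝ) (hf : ∀ i ∈ s, 0 ≤ f i)
    (hg : ∀ i ∈ s, 0 ≤ g i) {t : ℝ} (h0 : 0 < t) (h1 : t < 1) :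
    ∑ i ∈ s, f i ^ t * g i ^ (1 - t) ≤ (∑ i ∈ s, f i) ^ t * (∑ i ∈ s, g i) ^ (1 - t) := by
  have h1t : 0 < 1 - t := by linarith
  have hpq : (1/t).HolderConjugate (1/(1-t)) :=
    Real.holderConjugate_one_div h0 h1t (by ring)
  have H := Real.inner_le_Lp_mul_Lq_of_nonneg s hpq
    (f := fun i => f i ^ t) (g := fun i => g i ^ (1 - t))
    (fun i hi => Real.rpow_nonneg (hf i hi) _) (fun i hi => Real.rpow_nonneg (hg i hi) _)
  simp only [one_div_one_div] at H
  calc ∑ i ∈ s, f i ^ t * g i ^ (1 - t)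
      ≤ (∑ i ∈ s, (f i ^ t) ^ (1/t)) ^ t * (∑ i ∈ s, (g i ^ (1-t)) ^ (1/(1-t))) ^ (1-t) := H
    _ = (∑ i ∈ s, f i) ^ t * (∑ i ∈ s, g i) ^ (1 - t) := by
        congr 1
        · congr 1
          refine Finset.sum_congr rfl fun i hi => ?_
          rw [← Real.rpow_mul (hf i hi), mul_one_div_cancel h0.ne', Real.rpow_one]
        · congr 1
          refine Finset.sum_congr rfl fun i hi => ?_
          rw [← Real.rpow_mul (hg i hi), mul_one_div_cancel h1t.ne', Real.rpow_one]

/-- The multiplicative update with power `lam ∈ (0,1]` does not increase the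
objective `∑ i, r i / w i`. -/
theorem stmt_8 {n : ℕ} (w r : Fin n → ℝ)
    (hw : ∀ i, 0 < w i) (hw1 : ∑ i, w i = 1)
    (hr : ∀ i, 0 ≤ r i) (hrne : ∃ i, r i ≠ 0)
    (lam : ℝ) (hlam0 : 0 < lam) (hlam1 : lam ≤ 1)
    (w' : Fin n → ℝ)
    (hw' : ∀ i, w' i =
      r i ^ lam * w i ^ (1 - 2 * lam) / ∑ j, r j ^ lam * w j ^ (1 - 2 * lam)) :
    ∑ i ∈ univ.filter (fun i => 0 < w' i), r i / w' i ≤ ∑ i, r i / w i := by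
  obtain ⟨i0, hi0⟩ := hrne
  have hri0 : 0 < r i0 := lt_of_le_of_ne (hr i0) (Ne.symm hi0)
  set S := ∑ j, r j ^ lam * w j ^ (1 - 2 * lam) with hS
  have hwpos : ∀ i, 0 < w i ^ (1 - 2 * lam) := fun i => Real.rpow_pos_of_pos (hw i) _
  have hterm : ∀ j, 0 ≤ r j ^ lam * w j ^ (1 - 2 * lam) := fun j =>
    mul_nonneg (Real.rpow_nonneg (hr j) _) (Real.rpow_nonneg (hw j).le _)
  have hSpos : 0 < S :=
    Finset.sum_pos' (fun j _ => hterm j)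
      ⟨i0, mem_univ i0, mul_pos (Real.rpow_pos_of_pos hri0 _) (hwpos i0)⟩
  have hfil : univ.filter (fun i => 0 < w' i) = univ.filter (fun i => 0 < r i) := by
    apply filter_congr
    intro i _
    simp only [hw' i]
    constructor
    · intro h
      rcases (hr i).lt_or_eq with h' | h'
      · exact h'
      · rw [← h', Real.zero_rpow hlam0.ne', zero_mul, zero_div] at h
        exact absurd h (lt_irrefl 0)
    · intro h
      exact div_pos (mul_pos (Real.rpow_pos_of_pos h _) (hwpos i)) hSpos
  rw [hfil]
  set F := univ.filter (fun i : Fin n => 0 < r i) with hF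
  have hFmem : ∀ i ∈ F, 0 < r i := fun i hi => (mem_filter.mp hi).2
  have hterm_eq : ∀ i ∈ F, r i / w' i = S * (r i ^ (1 - lam) * w i ^ (2 * lam - 1)) := by
    intro i hi
    have hri : 0 < r i := hFmem i hi
    have ha : 0 < r i ^ lam * w i ^ (1 - 2 * lam) :=
      mul_pos (Real.rpow_pos_of_pos hri _) (hwpos i)
    have key : r i ^ (1 - lam) * w i ^ (2 * lam - 1) * (r i ^ lam * w i ^ (1 - 2 * lam))
        = r i := by
      rw [mul_mul_mul_comm, ← Real.rpow_add hri, ← Real.rpow_add (hw i)]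
      norm_num
    rw [hw' i, div_div_eq_mul_div, mul_comm (r i) S, mul_div_assoc]
    congr 1
    rw [div_eq_iff ha.ne']
    exact key.symm
  rw [Finset.sum_congr rfl hterm_eq, ← Finset.mul_sum]
  set T := ∑ i, r i / w i with hT
  have hTF : ∑ i ∈ F, r i / w i = T := by
    refine Finset.sum_subset (subset_univ F) fun i _ hi => ?_
    have : r i = 0 := by
      by_contra h
      exact hi (mem_filter.mpr ⟨mem_univ i, lt_of_le_of_ne (hr i) (Ne.symm h)⟩)
    simp [this]
  have hTpos : 0 < T := by
    rw [← hTF]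
    refine Finset.sum_pos' (fun i hi => div_nonneg (hr i) (hw i).le) ?_
    exact ⟨i0, mem_filter.mpr ⟨mem_univ i0, hri0⟩, div_pos hri0 (hw i0)⟩
  have hSF : S = ∑ i ∈ F, r i ^ lam * w i ^ (1 - 2 * lam) := by
    refine (Finset.sum_subset (subset_univ F) fun i _ hi => ?_).symm
    have : r i = 0 := by
      by_contra h
      exact hi (mem_filter.mpr ⟨mem_univ i, lt_of_le_of_ne (hr i) (Ne.symm h)⟩)
    rw [this, Real.zero_rpow hlam0.ne', zero_mul]
  have hwF : ∑ i ∈ F, w i ≤ 1 := by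
    rw [← hw1]
    exact Finset.sum_le_sum_of_subset_of_nonneg (subset_univ F) fun i _ _ => (hw i).le
  have hwFnonneg : 0 ≤ ∑ i ∈ F, w i := Finset.sum_nonneg fun i _ => (hw i).le
  rcases eq_or_lt_of_le hlam1 with hl1 | hl1
  · -- lam = 1
    subst hl1
    have hSeq : S = T := by
      rw [hSF, ← hTF]
      refine Finset.sum_congr rfl fun i hi => ?_
      have hri : 0 < r i := hFmem i hi
      rw [Real.rpow_one]
      norm_num
      rw [Real.rpow_neg_one, div_eq_mul_inv]
    have hBeq : (∑ i ∈ F, r i ^ (1 - (1:ℝ)) * w i ^ (2 * (1:ℝ) - 1)) = ∑ i ∈ F, w i := by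
      refine Finset.sum_congr rfl fun i hi => ?_
      norm_num
    rw [hSeq, hBeq]
    calc T * ∑ i ∈ F, w i ≤ T * 1 := by
          exact mul_le_mul_of_nonneg_left hwF hTpos.le
      _ = T := mul_one T
  · -- lam < 1
    have h1l : 0 < 1 - lam := by linarith
    have hdw : ∀ i ∈ F, 0 ≤ r i / w i := fun i _ => div_nonneg (hr i) (hw i).le
    have hgw : ∀ i ∈ F, 0 ≤ w i := fun i _ => (hw i).le
    have hS1 : S ≤ T ^ lam := by
      rw [hSF]
      have : ∀ i ∈ F, r i ^ lam * w i ^ (1 - 2 * lam)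
          = (r i / w i) ^ lam * w i ^ (1 - lam) := by
        intro i hi
        have hri : 0 < r i := hFmem i hi
        rw [Real.div_rpow (hr i) (hw i).le, div_mul_eq_mul_div, div_eq_mul_inv,
          mul_assoc, ← Real.rpow_neg (hw i).le, ← Real.rpow_add (hw i)]
        ring_nf
      rw [Finset.sum_congr rfl this]
      calc ∑ i ∈ F, (r i / w i) ^ lam * w i ^ (1 - lam)
          ≤ (∑ i ∈ F, r i / w i) ^ lam * (∑ i ∈ F, w i) ^ (1 - lam) :=
            holder_aux F _ _ hdw hgw hlam0 hl1
        _ ≤ T ^ lam * 1 := by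
            rw [hTF]
            exact mul_le_mul_of_nonneg_left
              (Real.rpow_le_one hwFnonneg hwF h1l.le)
              (Real.rpow_nonneg hTpos.le _)
        _ = T ^ lam := mul_one _
    have hB1 : (∑ i ∈ F, r i ^ (1 - lam) * w i ^ (2 * lam - 1)) ≤ T ^ (1 - lam) := by
      have heq : ∀ i ∈ F, r i ^ (1 - lam) * w i ^ (2 * lam - 1)
          = (r i / w i) ^ (1 - lam) * w i ^ (1 - (1 - lam)) := by
        intro i hi
        rw [Real.div_rpow (hr i) (hw i).le, div_mul_eq_mul_div, div_eq_mul_inv,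
          mul_assoc, ← Real.rpow_neg (hw i).le, ← Real.rpow_add (hw i)]
        ring_nf
      rw [Finset.sum_congr rfl heq]
      calc ∑ i ∈ F, (r i / w i) ^ (1 - lam) * w i ^ (1 - (1 - lam))
          ≤ (∑ i ∈ F, r i / w i) ^ (1 - lam) * (∑ i ∈ F, w i) ^ (1 - (1 - lam)) :=
            holder_aux F _ _ hdw hgw h1l (by linarith)
        _ ≤ T ^ (1 - lam) * 1 := by
            rw [hTF]
            exact mul_le_mul_of_nonneg_left
              (Real.rpow_le_one hwFnonneg hwF (by linarith))
              (Real.rpow_nonneg hTpos.le _)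
        _ = T ^ (1 - lam) := mul_one _
    have hBnonneg : 0 ≤ ∑ i ∈ F, r i ^ (1 - lam) * w i ^ (2 * lam - 1) :=
      Finset.sum_nonneg fun i _ =>
        mul_nonneg (Real.rpow_nonneg (hr i) _) (Real.rpow_nonneg (hw i).le _)
    calc S * ∑ i ∈ F, r i ^ (1 - lam) * w i ^ (2 * lam - 1)
        ≤ T ^ lam * T ^ (1 - lam) :=
          mul_le_mul hS1 hB1 hBnonneg (Real.rpow_nonneg hTpos.le _)
      _ = T := by rw [← Real.rpow_add hTpos]; norm_num
end

section
/- Assume λ ∈ (0,1) (strictly), and let w be a probability vector with all coordinates positive such that M(w) is positive definite, D(M(w)^{-1}) is positive semidefinite and D(M(w)^{-1}) A_i ≠ 0 for all i, and M(Tw) is positive definite, where T is the multiplicative update with d_i(w) = tr(M(w)^{-1} D(M(w)^{-1}) M(w)^{-1} A_i) and (Tw)_i = w_i d_i(w)^λ / Σ_j w_j d_j(w)^λ. If Tw ≠ w, then ψ(M(Tw)^{-1}) < ψ(M(w)^{-1}) strictly. (Strict monotonicity of the algorithm for 0 < λ < 1.) -/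
open Matrix

set_option linter.unusedSectionVars false
set_option maxHeartbeats 1000000

section Helpers

variable {ι : Type*} [Fintype ι] {κ : Type*} [Fintype κ] [DecidableEq κ]

open scoped MatrixOrder in
noncomputable def Matrix.PosSemidef.sqrt {A : Matrix κ κ ℝ} (_hA : A.PosSemidef) : Matrix κ κ ℝ :=
  CFC.sqrt A

open scoped MatrixOrder in
lemma Matrix.PosSemidef.posSemidef_sqrt {A : Matrix κ κ ℝ} (hA : A.PosSemidef) :
    hA.sqrt.PosSemidef :=
  (CFC.sqrt_nonneg A).posSemidef

open scoped MatrixOrder in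
lemma Matrix.PosSemidef.sqrt_mul_self {A : Matrix κ κ ℝ} (hA : A.PosSemidef) :
    hA.sqrt * hA.sqrt = A :=
  CFC.sqrt_mul_sqrt_self A hA.nonneg

lemma psd_dot' {A : Matrix κ κ ℝ} (hA : A.PosSemidef) (x : κ → ℝ) : 0 ≤ x ⬝ᵥ A *ᵥ x := by
  simpa using hA.dotProduct_mulVec_nonneg x

lemma herm_apply' {C : Matrix κ κ ℝ} (hC : C.IsHermitian) (i j : κ) : C i j = C j i := by
  simpa using congrFun (congrFun hC.symm i) j

lemma sum_smul_mulVec' (v : ι → ℝ) (A : ι → Matrix κ κ ℝ) (x : κ → ℝ) :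
    (∑ i, v i • A i) *ᵥ x = ∑ i, v i • (A i *ᵥ x) := by
  ext a
  simp only [Matrix.mulVec, dotProduct, Matrix.sum_apply, Matrix.smul_apply,
    Finset.sum_apply, Pi.smul_apply, smul_eq_mul, Finset.sum_mul, Finset.mul_sum]
  rw [Finset.sum_comm]
  simp [mul_assoc]

lemma dot_sum_smul' (v : ι → ℝ) (A : ι → Matrix κ κ ℝ) (x y : κ → ℝ) :
    x ⬝ᵥ (∑ i, v i • A i) *ᵥ y = ∑ i, v i * (x ⬝ᵥ A i *ᵥ y) := by
  rw [sum_smul_mulVec']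
  simp only [dotProduct, Finset.sum_apply, Pi.smul_apply, smul_eq_mul, Finset.mul_sum]
  rw [Finset.sum_comm]
  simp [mul_assoc, mul_left_comm]

lemma dot_sq_form' {S : Matrix κ κ ℝ} (hS : S.IsHermitian) (x y : κ → ℝ) :
    x ⬝ᵥ (S * S) *ᵥ y = (S *ᵥ x) ⬝ᵥ (S *ᵥ y) := by
  rw [← Matrix.mulVec_mulVec, Matrix.dotProduct_mulVec, ← Matrix.mulVec_transpose]
  congr 1
  rw [show Sᵀ = S from hS]

lemma mulVec_eq_zero_of_dot' {A : Matrix κ κ ℝ} (hA : A.PosSemidef) (x : κ → ℝ)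
    (hx : x ⬝ᵥ A *ᵥ x = 0) : A *ᵥ x = 0 := by
  have hS := hA.posSemidef_sqrt
  have hSS := hA.sqrt_mul_self
  have h0 : (hA.sqrt *ᵥ x) ⬝ᵥ (hA.sqrt *ᵥ x) = 0 := by
    rw [← dot_sq_form' hS.1, hSS, hx]
  have hz : hA.sqrt *ᵥ x = 0 := dotProduct_self_eq_zero.mp h0
  calc A *ᵥ x = (hA.sqrt * hA.sqrt) *ᵥ x := by rw [hSS]
    _ = hA.sqrt *ᵥ (hA.sqrt *ᵥ x) := by rw [Matrix.mulVec_mulVec]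
    _ = 0 := by rw [hz, Matrix.mulVec_zero]

lemma psd_cauchy_schwarz' {A : Matrix κ κ ℝ} (hA : A.PosSemidef) (x y : κ → ℝ) :
    x ⬝ᵥ A *ᵥ y ≤ Real.sqrt (x ⬝ᵥ A *ᵥ x) * Real.sqrt (y ⬝ᵥ A *ᵥ y) := by
  have hS := hA.posSemidef_sqrt
  have hSS := hA.sqrt_mul_self
  set S := hA.sqrt with hSdef
  have hx : x ⬝ᵥ A *ᵥ x = (S *ᵥ x) ⬝ᵥ (S *ᵥ x) := by rw [← hSS, dot_sq_form' hS.1]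
  have hy : y ⬝ᵥ A *ᵥ y = (S *ᵥ y) ⬝ᵥ (S *ᵥ y) := by rw [← hSS, dot_sq_form' hS.1]
  have hxy : x ⬝ᵥ A *ᵥ y = (S *ᵥ x) ⬝ᵥ (S *ᵥ y) := by rw [← hSS, dot_sq_form' hS.1]
  rw [hx, hy, hxy]
  set a := S *ᵥ x
  set b := S *ᵥ y
  have h2 : (a ⬝ᵥ b) ^ 2 ≤ (a ⬝ᵥ a) * (b ⬝ᵥ b) := by
    simpa [dotProduct, pow_two] using
      Finset.sum_mul_sq_le_sq_mul_sq Finset.univ a b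
  calc a ⬝ᵥ b ≤ |a ⬝ᵥ b| := le_abs_self _
    _ = Real.sqrt ((a ⬝ᵥ b) ^ 2) := (Real.sqrt_sq_eq_abs _).symm
    _ ≤ Real.sqrt ((a ⬝ᵥ a) * (b ⬝ᵥ b)) := Real.sqrt_le_sqrt h2
    _ = Real.sqrt (a ⬝ᵥ a) * Real.sqrt (b ⬝ᵥ b) :=
        Real.sqrt_mul (Finset.sum_nonneg fun i _ => mul_self_nonneg (a i)) _

lemma trace_conj_eq_sum' {C Q : Matrix κ κ ℝ} (hC : C.IsHermitian) :
    (C * Q * C).trace = ∑ k, (fun a => C a k) ⬝ᵥ Q *ᵥ (fun a => C a k) := by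
  simp only [Matrix.trace, Matrix.diag, Matrix.mul_apply, dotProduct, Matrix.mulVec,
    Finset.sum_mul, Finset.mul_sum]
  refine Finset.sum_congr rfl fun k _ => ?_
  rw [Finset.sum_comm]
  refine Finset.sum_congr rfl fun a _ => ?_
  refine Finset.sum_congr rfl fun b _ => ?_
  rw [herm_apply' hC k a]; ring

/-- `(B*Q).trace` as a sum of quadratic forms over the columns of `sqrt B`. -/
lemma trace_mul_eq_sum_form' {B : Matrix κ κ ℝ} (hB : B.PosSemidef) (Q : Matrix κ κ ℝ) :
    (B * Q).trace = ∑ k, (fun a => hB.sqrt a k) ⬝ᵥ Q *ᵥ (fun a => hB.sqrt a k) := by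
  rw [← trace_conj_eq_sum' hB.posSemidef_sqrt.1, Matrix.trace_mul_comm (hB.sqrt * Q) hB.sqrt,
    ← Matrix.mul_assoc, hB.sqrt_mul_self]

/-- Pointwise Cauchy–Schwarz bound: `zᵀ Y X⁻¹ Y z ≤ ∑ (wᵢ²/vᵢ) zᵀ Aᵢ z`. -/
lemma pointwise_cs' (A : ι → Matrix κ κ ℝ) (hA : ∀ i, (A i).PosSemidef)
    (w v : ι → ℝ) (hw : ∀ i, 0 ≤ w i) (hv : ∀ i, 0 ≤ v i)
    (hX : (∑ i, v i • A i).PosDef) (z : κ → ℝ)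
    (hz : ∀ i, v i = 0 → (A i) *ᵥ z = 0) :
    z ⬝ᵥ ((∑ i, w i • A i) * (∑ i, v i • A i)⁻¹ * (∑ i, w i • A i)) *ᵥ z
      ≤ ∑ i, (w i ^ 2 / v i) * (z ⬝ᵥ (A i) *ᵥ z) := by
  set X := ∑ i, v i • A i with hXdef
  set Y := ∑ i, w i • A i with hYdef
  have hXinv : X⁻¹.PosDef := hX.inv
  have hXX : X * X⁻¹ = 1 := Matrix.mul_nonsing_inv _ ((Matrix.isUnit_iff_isUnit_det _).mp hX.isUnit)
  set u : κ → ℝ := X⁻¹ *ᵥ (Y *ᵥ z) with hudef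
  set t : ℝ := (Y *ᵥ z) ⬝ᵥ u with htdef
  have hYsym : Yᵀ = Y := by
    rw [hYdef, Matrix.transpose_sum]
    refine Finset.sum_congr rfl fun i _ => ?_
    rw [Matrix.transpose_smul, show (A i)ᵀ = A i from (hA i).1]
  have hdot : ∀ p, z ⬝ᵥ Y *ᵥ p = (Y *ᵥ z) ⬝ᵥ p := fun p => by
    rw [Matrix.dotProduct_mulVec, ← Matrix.mulVec_transpose, hYsym]
  have hlhs : z ⬝ᵥ (Y * X⁻¹ * Y) *ᵥ z = t := by
    rw [← Matrix.mulVec_mulVec, ← Matrix.mulVec_mulVec, hdot]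
  have ht0 : 0 ≤ t := psd_dot' hXinv.posSemidef _
  have htY : t = ∑ i, w i * (z ⬝ᵥ A i *ᵥ u) := by
    rw [← dot_sum_smul', ← hYdef, hdot]
  have hXu : X *ᵥ u = Y *ᵥ z := by
    rw [hudef, Matrix.mulVec_mulVec, hXX, Matrix.one_mulVec]
  have htu : ∑ i, v i * (u ⬝ᵥ A i *ᵥ u) = t := by
    rw [← dot_sum_smul', ← hXdef, Matrix.dotProduct_mulVec u, ← Matrix.mulVec_transpose,
      show Xᵀ = X from hX.1, hXu, htdef, dotProduct_comm]
  set r : ι → ℝ := fun i => w i * (Real.sqrt (z ⬝ᵥ A i *ᵥ z) * Real.sqrt (u ⬝ᵥ A i *ᵥ u))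
    with hrdef
  have hr0 : ∀ i, 0 ≤ r i := fun i =>
    mul_nonneg (hw i) (mul_nonneg (Real.sqrt_nonneg _) (Real.sqrt_nonneg _))
  have hterm : ∀ i, w i * (z ⬝ᵥ A i *ᵥ u) ≤ r i := fun i =>
    mul_le_mul_of_nonneg_left (psd_cauchy_schwarz' (hA i) z u) (hw i)
  have ht_le : t ≤ ∑ i, r i := by
    rw [htY]; exact Finset.sum_le_sum fun i _ => hterm i
  have hsq : ∀ i ∈ Finset.univ, r i ^ 2 =
      (w i ^ 2 / v i * (z ⬝ᵥ A i *ᵥ z)) * (v i * (u ⬝ᵥ A i *ᵥ u)) := by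
    intro i _
    rcases eq_or_lt_of_le (hv i) with h0 | hpos
    · have hAz : A i *ᵥ z = 0 := hz i h0.symm
      have : z ⬝ᵥ A i *ᵥ z = 0 := by rw [hAz, dotProduct_zero]
      rw [hrdef]
      simp [this, ← h0]
    · have h1 : Real.sqrt (z ⬝ᵥ A i *ᵥ z) ^ 2 = z ⬝ᵥ A i *ᵥ z :=
        Real.sq_sqrt (psd_dot' (hA i) z)
      have h2 : Real.sqrt (u ⬝ᵥ A i *ᵥ u) ^ 2 = u ⬝ᵥ A i *ᵥ u :=
        Real.sq_sqrt (psd_dot' (hA i) u)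
      rw [hrdef]
      have : (w i * (Real.sqrt (z ⬝ᵥ A i *ᵥ z) * Real.sqrt (u ⬝ᵥ A i *ᵥ u))) ^ 2
          = w i ^ 2 * (Real.sqrt (z ⬝ᵥ A i *ᵥ z) ^ 2 * Real.sqrt (u ⬝ᵥ A i *ᵥ u) ^ 2) := by
        ring
      rw [this, h1, h2]
      field_simp
  have hCS := Finset.sum_sq_le_sum_mul_sum_of_sq_eq_mul Finset.univ
    (f := fun i => w i ^ 2 / v i * (z ⬝ᵥ A i *ᵥ z))
    (g := fun i => v i * (u ⬝ᵥ A i *ᵥ u))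
    (fun i _ => mul_nonneg (div_nonneg (sq_nonneg _) (hv i)) (psd_dot' (hA i) z))
    (fun i _ => mul_nonneg (hv i) (psd_dot' (hA i) u))
    hsq
  rw [htu] at hCS
  have hRnonneg : 0 ≤ ∑ i, r i := Finset.sum_nonneg fun i _ => hr0 i
  have hPnonneg : 0 ≤ ∑ i, w i ^ 2 / v i * (z ⬝ᵥ A i *ᵥ z) :=
    Finset.sum_nonneg fun i _ => mul_nonneg (div_nonneg (sq_nonneg _) (hv i)) (psd_dot' (hA i) z)
  rw [hlhs]
  nlinarith [hCS, ht_le, ht0, hRnonneg, hPnonneg]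

/-- Trace-level Cauchy–Schwarz bound. -/
lemma trace_cs' (A : ι → Matrix κ κ ℝ) (hA : ∀ i, (A i).PosSemidef)
    (w v : ι → ℝ) (hw : ∀ i, 0 ≤ w i) (hv : ∀ i, 0 ≤ v i)
    (hX : (∑ i, v i • A i).PosDef) (B : Matrix κ κ ℝ) (hB : B.PosSemidef)
    (hz : ∀ i, v i = 0 → (B * A i).trace = 0) :
    (B * ((∑ i, w i • A i) * (∑ i, v i • A i)⁻¹ * (∑ i, w i • A i))).trace
      ≤ ∑ i, (w i ^ 2 / v i) * (B * A i).trace := by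
  have hCol : ∀ i k, v i = 0 → (A i) *ᵥ (fun a => hB.sqrt a k) = 0 := by
    intro i k hvi
    have htr := hz i hvi
    rw [trace_mul_eq_sum_form' hB] at htr
    have hnn : ∀ k ∈ Finset.univ, (0:ℝ) ≤ (fun a => hB.sqrt a k) ⬝ᵥ A i *ᵥ (fun a => hB.sqrt a k) :=
      fun k _ => psd_dot' (hA i) _
    exact mulVec_eq_zero_of_dot' (hA i) _
      ((Finset.sum_eq_zero_iff_of_nonneg hnn).mp htr k (Finset.mem_univ k))
  rw [trace_mul_eq_sum_form' hB]
  calc ∑ k, (fun a => hB.sqrt a k) ⬝ᵥ ((∑ i, w i • A i) * (∑ i, v i • A i)⁻¹ * (∑ i, w i • A i))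
        *ᵥ (fun a => hB.sqrt a k)
      ≤ ∑ k, ∑ i, (w i ^ 2 / v i) *
          ((fun a => hB.sqrt a k) ⬝ᵥ (A i) *ᵥ (fun a => hB.sqrt a k)) := by
        exact Finset.sum_le_sum fun k _ =>
          pointwise_cs' A hA w v hw hv hX _ (fun i h => hCol i k h)
    _ = ∑ i, (w i ^ 2 / v i) * (B * A i).trace := by
        rw [Finset.sum_comm]
        refine Finset.sum_congr rfl fun i _ => ?_
        rw [← Finset.mul_sum, trace_mul_eq_sum_form' hB]

/-- Strict weighted Chebyshev sum inequality. -/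
lemma chebyshev_strict' (w f g : ι → ℝ) (hw : ∀ i, 0 < w i) (hw1 : ∑ i, w i = 1)
    (hmono : ∀ i j, 0 ≤ (f i - f j) * (g i - g j))
    (i₀ j₀ : ι) (hstrict : 0 < (f i₀ - f j₀) * (g i₀ - g j₀)) :
    (∑ i, w i * f i) * (∑ i, w i * g i) < ∑ i, w i * (f i * g i) := by
  have key : 0 < ∑ i, ∑ j, w i * w j * ((f i - f j) * (g i - g j)) := by
    refine Finset.sum_pos' (fun i _ => Finset.sum_nonneg fun j _ =>
      mul_nonneg (mul_nonneg (hw i).le (hw j).le) (hmono i j)) ⟨i₀, Finset.mem_univ _, ?_⟩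
    refine Finset.sum_pos' (fun j _ =>
      mul_nonneg (mul_nonneg (hw i₀).le (hw j).le) (hmono i₀ j)) ⟨j₀, Finset.mem_univ _, ?_⟩
    exact mul_pos (mul_pos (hw i₀) (hw j₀)) hstrict
  have expand : ∑ i, ∑ j, w i * w j * ((f i - f j) * (g i - g j))
      = 2 * (∑ i, w i * (f i * g i)) - 2 * ((∑ i, w i * f i) * (∑ i, w i * g i)) := by
    have e1 : ∀ i j : ι, w i * w j * ((f i - f j) * (g i - g j)) =
        (w i * (f i * g i)) * w j - (w i * f i) * (w j * g j)
          - (w i * g i) * (w j * f j) + w i * (w j * (f j * g j)) := fun i j => by ring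
    calc ∑ i, ∑ j, w i * w j * ((f i - f j) * (g i - g j))
        = ∑ i, ∑ j, ((w i * (f i * g i)) * w j - (w i * f i) * (w j * g j)
          - (w i * g i) * (w j * f j) + w i * (w j * (f j * g j))) := by
          exact Finset.sum_congr rfl fun i _ => Finset.sum_congr rfl fun j _ => e1 i j
      _ = ∑ i, ((w i * (f i * g i)) * (∑ j, w j) - (w i * f i) * (∑ j, w j * g j)
          - (w i * g i) * (∑ j, w j * f j) + w i * (∑ j, w j * (f j * g j))) := by
          refine Finset.sum_congr rfl fun i _ => ?_
          rw [Finset.sum_add_distrib, Finset.sum_sub_distrib, Finset.sum_sub_distrib,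
            ← Finset.mul_sum, ← Finset.mul_sum, ← Finset.mul_sum, ← Finset.mul_sum]
      _ = (∑ i, w i * (f i * g i)) * (∑ j, w j) - (∑ i, w i * f i) * (∑ j, w j * g j)
          - (∑ i, w i * g i) * (∑ j, w j * f j) + (∑ i, w i) * (∑ j, w j * (f j * g j)) := by
          rw [Finset.sum_add_distrib, Finset.sum_sub_distrib, Finset.sum_sub_distrib,
            ← Finset.sum_mul, ← Finset.sum_mul, ← Finset.sum_mul, ← Finset.sum_mul]
      _ = 2 * (∑ i, w i * (f i * g i)) - 2 * ((∑ i, w i * f i) * (∑ i, w i * g i)) := by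
          rw [hw1]; ring
  linarith

end Helpers

/-- Strict monotonicity of the multiplicative algorithm for `0 < lam < 1`:
if `Tw ≠ w` then `ψ(M(Tw)⁻¹) < ψ(M(w)⁻¹)` strictly. -/
theorem stmt_17 {n m : ℕ} (hn : 0 < n) (hm : 0 < m)
    (A : Fin n → Matrix (Fin m) (Fin m) ℝ) (hA : ∀ i, (A i).PosSemidef)
    (ψ : Matrix (Fin m) (Fin m) ℝ → ℝ)
    (D : Matrix (Fin m) (Fin m) ℝ → Matrix (Fin m) (Fin m) ℝ)
    (hDpsd : ∀ M : Matrix (Fin m) (Fin m) ℝ, M.PosDef → (D M).PosSemidef)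
    (hconc : ∀ M₁ M₂ : Matrix (Fin m) (Fin m) ℝ, M₁.PosDef → M₂.PosDef →
      ψ M₂ ≤ ψ M₁ + (D M₁ * (M₂ - M₁)).trace)
    (M : (Fin n → ℝ) → Matrix (Fin m) (Fin m) ℝ)
    (hM : ∀ v : Fin n → ℝ, M v = ∑ i, v i • A i)
    (lam : ℝ) (hlam0 : 0 < lam) (hlam1 : lam < 1)
    (w : Fin n → ℝ) (hw : ∀ i, 0 < w i) (hw1 : ∑ i, w i = 1)
    (d : Fin n → ℝ)
    (hd : ∀ i, d i = ((M w)⁻¹ * D ((M w)⁻¹) * (M w)⁻¹ * A i).trace)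
    (Tw : Fin n → ℝ)
    (hTw : ∀ i, Tw i = w i * d i ^ lam / ∑ j, w j * d j ^ lam)
    (hMwpos : (M w).PosDef)
    (hDA : ∀ i, D ((M w)⁻¹) * A i ≠ 0)
    (hMTwpos : (M Tw).PosDef)
    (hne : Tw ≠ w) :
    ψ ((M Tw)⁻¹) < ψ ((M w)⁻¹) := by
  classical
  have hMw := hM w
  have hMTw := hM Tw
  have hYinv : (M w)⁻¹.PosDef := hMwpos.inv
  have hXinv : (M Tw)⁻¹.PosDef := hMTwpos.inv
  have hDhpsd : (D ((M w)⁻¹)).PosSemidef := hDpsd _ hYinv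
  have hBpsd : ((M w)⁻¹ * D ((M w)⁻¹) * (M w)⁻¹).PosSemidef := by
    have h := hDhpsd.conjTranspose_mul_mul_same ((M w)⁻¹)
    rwa [hYinv.1.eq] at h
  set B := (M w)⁻¹ * D ((M w)⁻¹) * (M w)⁻¹ with hBdef
  have hdB : ∀ i, d i = (B * A i).trace := hd
  have hd0 : ∀ i, 0 ≤ d i := fun i => by
    rw [hdB i, trace_mul_eq_sum_form' hBpsd]
    exact Finset.sum_nonneg fun k _ => psd_dot' (hA i) _
  have hdetY : IsUnit (M w).det := (Matrix.isUnit_iff_isUnit_det _).mp hMwpos.isUnit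
  -- d is not constant
  have hdne : ∃ i j, d i ≠ d j := by
    by_contra hcon
    push_neg at hcon
    have i0 : Fin n := ⟨0, hn⟩
    rcases eq_or_lt_of_le (hd0 i0) with hc0 | hcpos
    · have hdz : ∀ i, d i = 0 := fun i => (hcon i i0).trans hc0.symm
      have hTwz : ∀ i, Tw i = 0 := fun i => by
        rw [hTw i, hdz i, Real.zero_rpow hlam0.ne', mul_zero, zero_div]
      have hM0 : M Tw = 0 := by
        rw [hMTw]
        exact Finset.sum_eq_zero fun i _ => by rw [hTwz i, zero_smul]
      have hx : (fun _ => (1:ℝ) : Fin m → ℝ) ≠ 0 := fun h =>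
        one_ne_zero (congrFun h ⟨0, hm⟩)
      have hpd := hMTwpos.dotProduct_mulVec_pos hx
      rw [hM0] at hpd
      simp [Matrix.zero_mulVec] at hpd
    · have hTweq : Tw = w := funext fun i => by
        have hsum : ∑ j, w j * d j ^ lam = d i0 ^ lam := by
          calc ∑ j, w j * d j ^ lam = ∑ j, w j * d i0 ^ lam :=
              Finset.sum_congr rfl fun j _ => by rw [hcon j i0]
            _ = (∑ j, w j) * d i0 ^ lam := (Finset.sum_mul _ _ _).symm
            _ = d i0 ^ lam := by rw [hw1, one_mul]
        rw [hTw i, hcon i i0, hsum,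
          mul_div_cancel_right₀ _ (Real.rpow_pos_of_pos hcpos lam).ne']
      exact hne hTweq
  obtain ⟨i₀, j₀, hdij⟩ := hdne
  have hdpos_ex : ∃ j, 0 < d j := by
    by_contra hcon
    push_neg at hcon
    exact hdij (((hd0 i₀).antisymm (hcon i₀)).symm.trans ((hd0 j₀).antisymm (hcon j₀)))
  obtain ⟨jp, hjp⟩ := hdpos_ex
  set S := ∑ j, w j * d j ^ lam with hSdef
  have hSpos : 0 < S :=
    Finset.sum_pos' (fun j _ => mul_nonneg (hw j).le (Real.rpow_nonneg (hd0 j) _))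
      ⟨jp, Finset.mem_univ _, mul_pos (hw jp) (Real.rpow_pos_of_pos hjp _)⟩
  have hTw0 : ∀ i, 0 ≤ Tw i := fun i => by
    rw [hTw i]
    exact div_nonneg (mul_nonneg (hw i).le (Real.rpow_nonneg (hd0 i) _)) hSpos.le
  have hTwzero : ∀ i, Tw i = 0 → (B * A i).trace = 0 := by
    intro i h
    rw [hTw i] at h
    rcases div_eq_zero_iff.mp h with hnum | hden
    · rcases mul_eq_zero.mp hnum with h1 | h2
      · exact absurd h1 (hw i).ne'
      · have hdz : d i = 0 := by
          by_contra hne2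
          exact (Real.rpow_pos_of_pos ((hd0 i).lt_of_ne (Ne.symm hne2)) lam).ne' h2
        rw [← hdB i, hdz]
    · exact absurd hden hSpos.ne'
  have hXpd : (∑ i, Tw i • A i).PosDef := hMTw ▸ hMTwpos
  have hkey := trace_cs' A hA w Tw (fun i => (hw i).le) hTw0 hXpd B hBpsd hTwzero
  rw [← hMw, ← hMTw] at hkey
  -- trace identities
  have hid1 : (D ((M w)⁻¹) * (M w)⁻¹).trace = ∑ i, w i * d i := by
    have hBY : B * (M w) = (M w)⁻¹ * D ((M w)⁻¹) := by
      rw [hBdef, Matrix.mul_assoc ((M w)⁻¹ * D ((M w)⁻¹)),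
        Matrix.nonsing_inv_mul _ hdetY, Matrix.mul_one]
    calc (D ((M w)⁻¹) * (M w)⁻¹).trace = (B * (M w)).trace := by
          rw [hBY, Matrix.trace_mul_comm]
      _ = ∑ i, w i * d i := by
          rw [hMw, Finset.mul_sum]
          rw [Matrix.trace_sum]
          refine Finset.sum_congr rfl fun i _ => ?_
          rw [Matrix.mul_smul, Matrix.trace_smul, smul_eq_mul, ← hdB i]
  have hid2 : (D ((M w)⁻¹) * (M Tw)⁻¹).trace = (B * ((M w) * (M Tw)⁻¹ * (M w))).trace := by
    have e : B * ((M w) * (M Tw)⁻¹ * (M w)) = (M w)⁻¹ * (D ((M w)⁻¹) * ((M Tw)⁻¹ * (M w))) := by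
      rw [hBdef]
      simp only [Matrix.mul_assoc]
      rw [Matrix.nonsing_inv_mul_cancel_left _ _ hdetY]
    rw [e, Matrix.trace_mul_comm ((M w)⁻¹) (D ((M w)⁻¹) * ((M Tw)⁻¹ * (M w)))]
    simp only [Matrix.mul_assoc]
    rw [Matrix.mul_nonsing_inv _ hdetY, Matrix.mul_one]
  -- rewrite RHS of hkey in terms of `S` and `d^(1-lam)`
  have hrhs : ∑ i, (w i ^ 2 / Tw i) * (B * A i).trace = S * ∑ i, w i * d i ^ (1 - lam) := by
    rw [Finset.mul_sum]
    refine Finset.sum_congr rfl fun i _ => ?_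
    rw [← hdB i]
    rcases eq_or_lt_of_le (hd0 i) with h0 | hpos
    · rw [← h0]
      simp [Real.zero_rpow (ne_of_gt (by linarith : (0:ℝ) < 1 - lam))]
    · have hTwI : Tw i = w i * d i ^ lam / S := hTw i
      have hfl : (0:ℝ) < d i ^ lam := Real.rpow_pos_of_pos hpos _
      have h1lam : d i ^ (1 - lam) = d i / d i ^ lam := by
        rw [Real.rpow_sub hpos, Real.rpow_one]
      rw [hTwI, h1lam]
      have hwi := (hw i).ne'
      have hfl' := hfl.ne'
      have hS' := hSpos.ne'
      field_simp
  -- strict Chebyshev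
  have hmono : ∀ i j, 0 ≤ (d i ^ lam - d j ^ lam) * (d i ^ (1-lam) - d j ^ (1-lam)) := by
    intro i j
    rcases le_total (d i) (d j) with h | h
    · have h1 := Real.rpow_le_rpow (hd0 i) h hlam0.le
      have h2 := Real.rpow_le_rpow (hd0 i) h (by linarith : (0:ℝ) ≤ 1 - lam)
      nlinarith
    · have h1 := Real.rpow_le_rpow (hd0 j) h hlam0.le
      have h2 := Real.rpow_le_rpow (hd0 j) h (by linarith : (0:ℝ) ≤ 1 - lam)
      exact mul_nonneg (by linarith) (by linarith)
  have hstrict : 0 < (d i₀ ^ lam - d j₀ ^ lam) * (d i₀ ^ (1-lam) - d j₀ ^ (1-lam)) := by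
    rcases lt_or_gt_of_ne hdij with h | h
    · have h1 := Real.rpow_lt_rpow (hd0 i₀) h hlam0
      have h2 := Real.rpow_lt_rpow (hd0 i₀) h (by linarith : (0:ℝ) < 1 - lam)
      nlinarith
    · have h1 := Real.rpow_lt_rpow (hd0 j₀) h hlam0
      have h2 := Real.rpow_lt_rpow (hd0 j₀) h (by linarith : (0:ℝ) < 1 - lam)
      exact mul_pos (by linarith) (by linarith)
  have hcheb := chebyshev_strict' w (fun i => d i ^ lam) (fun i => d i ^ (1 - lam)) hw hw1
    hmono i₀ j₀ hstrict
  have hfg : ∑ i, w i * (d i ^ lam * d i ^ (1 - lam)) = ∑ i, w i * d i := by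
    refine Finset.sum_congr rfl fun i _ => ?_
    rcases eq_or_lt_of_le (hd0 i) with h0 | hpos
    · rw [← h0]
      simp [Real.zero_rpow hlam0.ne']
    · rw [← Real.rpow_add hpos, show lam + (1 - lam) = 1 by ring, Real.rpow_one]
  have hchebS : S * (∑ i, w i * d i ^ (1 - lam)) < ∑ i, w i * d i := by
    rw [hSdef]
    simpa [hfg] using hcheb
  -- final assembly
  have hconc' := hconc ((M w)⁻¹) ((M Tw)⁻¹) hYinv hXinv
  have htr_sub : (D ((M w)⁻¹) * ((M Tw)⁻¹ - (M w)⁻¹)).trace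
      = (D ((M w)⁻¹) * (M Tw)⁻¹).trace - (D ((M w)⁻¹) * (M w)⁻¹).trace := by
    rw [Matrix.mul_sub, Matrix.trace_sub]
  rw [htr_sub, hid1, hid2] at hconc'
  rw [hrhs] at hkey
  linarith [hkey, hchebS, hconc']
end
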